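/- arXiv:2508.20246 — 4 statements merged into one kernel-verified Lean document; each statement's English description precedes it below -/
import Mathlib

section
/- Let F be a family of subsets of Fin n that is downward closed (T ⊆ S and S ∈ F imply T ∈ F) and contains the empty set. Let (X_1,U_1),…,(X_n,U_n) be independent pairs of real random variables on a probability space, with each X_i nonnegative and integrable. For each i let A_i be an event measurable with respect to σ(X_i,U_i), and define the random variable Y_i := 1_{A_i}·E[X_i | A_i] if P(A_i) > 0 and Y_i := 0 otherwise (where E[X_i | A_i] = E[X_i·1_{A_i}]/P(A_i)). Then E[ max_{S∈F} Σ_{i∈S} Y_i ] ≤ E[ max_{S∈F} Σ_{i∈S} X_i ]. (This is the reduction step showing that replacing each value by its conditional expectation on an acceptance event, and by 0 otherwise, can only decrease the ex post optimum; it drives the Bernoulli reductions in the paper's correlation-gap lemma and in its theorem equating the frugal correlation gap with the ex ante free-order prophet inequality.) -/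
open Finset MeasureTheory ProbabilityTheory

/-- Replacing each value by its conditional expectation on an acceptance event
(measurable with respect to `σ(X i, U i)`), and by `0` otherwise, can only decrease
the ex post optimum. -/
theorem stmt1 (n : ℕ) (F : Finset (Finset (Fin n)))
    (hdc : ∀ S ∈ F, ∀ T ⊆ S, T ∈ F) (hemp : ∅ ∈ F)
    {Ω : Type*} [MeasurableSpace Ω] (μ : Measure Ω) [IsProbabilityMeasure μ]
    (X U : Fin n → Ω → ℝ)
    (hXmeas : ∀ i, Measurable (X i)) (hUmeas : ∀ i, Measurable (U i))
    (hindep : iIndepFun (fun i ω => (X i ω, U i ω)) μ)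
    (hXnonneg : ∀ i ω, 0 ≤ X i ω) (hXint : ∀ i, Integrable (X i) μ)
    (A : Fin n → Set Ω)
    (hA : ∀ i, MeasurableSet[MeasurableSpace.comap (fun ω => (X i ω, U i ω)) inferInstance] (A i))
    (Y : Fin n → Ω → ℝ)
    (hY : ∀ i, Y i = (A i).indicator (fun _ => (∫ ω in A i, X i ω ∂μ) / (μ (A i)).toReal)) :
    ∫ ω, F.sup' ⟨∅, hemp⟩ (fun S => ∑ i ∈ S, Y i ω) ∂μ
      ≤ ∫ ω, F.sup' ⟨∅, hemp⟩ (fun S => ∑ i ∈ S, X i ω) ∂μ := by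
  classical
  have ne : F.Nonempty := ⟨∅, hemp⟩
  have hpairmeas : ∀ i, Measurable (fun ω => (X i ω, U i ω)) :=
    fun i => (hXmeas i).prodMk (hUmeas i)
  have hA' : ∀ i, ∃ t : Set (ℝ × ℝ), MeasurableSet t ∧ (fun ω => (X i ω, U i ω)) ⁻¹' t = A i :=
    fun i => hA i
  choose B hBmeas hBpre using hA'
  have hABiff : ∀ i ω, ω ∈ A i ↔ (X i ω, U i ω) ∈ B i := by
    intro i ω
    conv_lhs => rw [← hBpre i]
    rfl
  have hAmeas : ∀ i, MeasurableSet (A i) := fun i => by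
    rw [← hBpre i]; exact (hpairmeas i) (hBmeas i)
  set c : Fin n → ℝ := fun i => (∫ ω in A i, X i ω ∂μ) / (μ (A i)).toReal with hc
  set Z : Fin n → Ω → ℝ := fun i => (A i).indicator (X i) with hZ
  have hZint : ∀ i, Integrable (Z i) μ := fun i => (hXint i).indicator (hAmeas i)
  have hZmeas : ∀ i, Measurable (Z i) := fun i => (hXmeas i).indicator (hAmeas i)
  have hZnonneg : ∀ i ω, 0 ≤ Z i ω := fun i ω =>
    Set.indicator_nonneg (fun x _ => hXnonneg i x) ω
  set E : Finset (Fin n) → Set Ω := fun s => {ω | ∀ j, ω ∈ A j ↔ j ∈ s} with hE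
  have hEmeas : ∀ s, MeasurableSet (E s) := by
    intro s
    have heq : E s = ⋂ j, (if j ∈ s then A j else (A j)ᶜ) := by
      ext ω
      simp only [hE, Set.mem_setOf_eq, Set.mem_iInter]
      constructor
      · intro h j
        by_cases hj : j ∈ s
        · simpa [hj] using (h j).2 hj
        · simp only [hj, if_false, Set.mem_compl_iff]
          exact fun hω => hj ((h j).1 hω)
      · intro h j
        by_cases hj : j ∈ s
        · have := h j; rw [if_pos hj] at this
          exact ⟨fun _ => hj, fun _ => this⟩
        · have := h j; rw [if_neg hj] at this
          exact ⟨fun hω => absurd hω this, fun hs => absurd hs hj⟩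
    rw [heq]
    exact MeasurableSet.iInter fun j => by
      by_cases hj : j ∈ s <;> simp [hj, hAmeas j, (hAmeas j).compl]
  set Bof : Ω → Finset (Fin n) := fun ω => Finset.univ.filter (fun j => ω ∈ A j) with hBof
  have hBofmem : ∀ ω, ω ∈ E (Bof ω) := fun ω j => by simp [hBof, hE]
  have hBofuniq : ∀ ω s, ω ∈ E s → s = Bof ω := by
    intro ω s hω
    ext j
    simp only [hBof, Finset.mem_filter, Finset.mem_univ, true_and]
    exact (hω j).symm
  -- the key independence computation
  have hkey : ∀ (s : Finset (Fin n)), ∀ i ∈ s,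
      ∫ ω, (E s).indicator (Z i) ω ∂μ = c i * (μ (E s)).toReal := by
    intro s i hi
    set D : Set Ω := {ω | ∀ j, j ≠ i → (ω ∈ A j ↔ j ∈ s)} with hD
    have hED : E s = A i ∩ D := by
      ext ω
      constructor
      · intro h; exact ⟨(h i).2 hi, fun j _ => h j⟩
      · rintro ⟨h1, h2⟩ j
        by_cases hj : j = i
        · subst hj; exact ⟨fun _ => hi, fun _ => h1⟩
        · exact h2 j hj
    have hDmeas : MeasurableSet D := by
      have heq : D = ⋂ j, if j = i then Set.univ else (if j ∈ s then A j else (A j)ᶜ) := by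
        ext ω
        simp only [Set.mem_iInter, hD, Set.mem_setOf_eq]
        constructor
        · intro h j
          by_cases hj : j = i
          · simp [hj]
          · rw [if_neg hj]
            have hthis := h j hj
            by_cases hjs : j ∈ s
            · rw [if_pos hjs]; exact hthis.2 hjs
            · rw [if_neg hjs]; exact fun h' => hjs (hthis.1 h')
        · intro h j hj
          have hthis := h j
          rw [if_neg hj] at hthis
          by_cases hjs : j ∈ s
          · rw [if_pos hjs] at hthis; exact ⟨fun _ => hjs, fun _ => hthis⟩
          · rw [if_neg hjs] at hthis
            exact ⟨fun hω => absurd hω hthis, fun h' => absurd h' hjs⟩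
      rw [heq]
      exact MeasurableSet.iInter fun j => by
        by_cases hj : j = i
        · simp [hj]
        · by_cases hjs : j ∈ s <;> simp [hj, hjs, hAmeas j, (hAmeas j).compl]
    have hIF := hindep.indepFun_finset {i} ({i}ᶜ) disjoint_compl_right hpairmeas
    set G : Set ((({i}ᶜ : Finset (Fin n)) : Type _) → ℝ × ℝ) :=
      {x | ∀ j : (({i}ᶜ : Finset (Fin n)) : Type _),
        x j ∈ (if (j : Fin n) ∈ s then B (j : Fin n) else (B (j : Fin n))ᶜ)} with hG
    have hGmeas : MeasurableSet G := by
      have heq : G = ⋂ j : (({i}ᶜ : Finset (Fin n)) : Type _),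
          (fun x : (({i}ᶜ : Finset (Fin n)) : Type _) → ℝ × ℝ => x j) ⁻¹'
            (if (j : Fin n) ∈ s then B (j : Fin n) else (B (j : Fin n))ᶜ) := by
        ext x
        simp only [hG, Set.mem_setOf_eq, Set.mem_iInter, Set.mem_preimage]
      rw [heq]
      exact MeasurableSet.iInter fun j => (measurable_pi_apply j)
        (by by_cases hjs : (j : Fin n) ∈ s <;> simp [hjs, hBmeas, (hBmeas _).compl])
    have hRmeas : Measurable (Set.indicator G (fun _ => (1:ℝ))) := measurable_const.indicator hGmeas
    have hDeq : (fun ω => Set.indicator G (fun _ => (1:ℝ))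
        (fun j : (({i}ᶜ : Finset (Fin n)) : Type _) => (X (j : Fin n) ω, U (j : Fin n) ω)))
        = D.indicator (fun _ => (1:ℝ)) := by
      funext ω
      have hmem : ((fun j : (({i}ᶜ : Finset (Fin n)) : Type _) =>
          (X (j : Fin n) ω, U (j : Fin n) ω)) ∈ G) ↔ ω ∈ D := by
        simp only [hG, Set.mem_setOf_eq, hD]
        constructor
        · intro h j hj
          have hj' : j ∈ ({i}ᶜ : Finset (Fin n)) := by
            simpa [Finset.mem_compl, Finset.mem_singleton] using hj
          have hthis := h ⟨j, hj'⟩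
          by_cases hjs : j ∈ s
          · rw [if_pos hjs] at hthis
            exact ⟨fun _ => hjs, fun _ => (hABiff j ω).mpr hthis⟩
          · rw [if_neg hjs] at hthis
            exact ⟨fun hω => absurd ((hABiff j ω).mp hω) hthis, fun h' => absurd h' hjs⟩
        · intro h j
          have hj : (j : Fin n) ≠ i :=
            Finset.notMem_singleton.mp (Finset.mem_compl.mp j.2)
          have hthis := h (j : Fin n) hj
          by_cases hjs : (j : Fin n) ∈ s
          · rw [if_pos hjs]
            exact (hABiff _ ω).mp (hthis.2 hjs)
          · rw [if_neg hjs]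
            exact fun h' => hjs (hthis.1 ((hABiff _ ω).mpr h'))
      by_cases hω : ω ∈ D
      · rw [Set.indicator_of_mem (hmem.mpr hω), Set.indicator_of_mem hω]
      · rw [Set.indicator_of_notMem (fun h => hω (hmem.mp h)),
          Set.indicator_of_notMem hω]
    have hcomp : ∀ φ : ℝ × ℝ → ℝ, Measurable φ →
        IndepFun (fun ω => φ (X i ω, U i ω)) (D.indicator (fun _ => (1:ℝ))) μ := by
      intro φ hφ
      have hL : Measurable (fun x : (({i} : Finset (Fin n)) : Type _) → ℝ × ℝ =>
          φ (x ⟨i, Finset.mem_singleton_self i⟩)) := hφ.comp (measurable_pi_apply _)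
      have h2 : IndepFun (fun ω => φ (X i ω, U i ω))
          (fun ω => Set.indicator G (fun _ => (1:ℝ))
            (fun j : (({i}ᶜ : Finset (Fin n)) : Type _) => (X (j : Fin n) ω, U (j : Fin n) ω))) μ :=
        hIF.comp hL hRmeas
      rw [hDeq] at h2
      exact h2
    have hZeq : Z i = fun ω => ((B i).indicator (fun p : ℝ × ℝ => p.1)) (X i ω, U i ω) := by
      funext ω
      by_cases hω : ω ∈ A i
      · show (A i).indicator (X i) ω = _
        rw [Set.indicator_of_mem hω, Set.indicator_of_mem ((hABiff i ω).mp hω)]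
      · show (A i).indicator (X i) ω = _
        rw [Set.indicator_of_notMem hω,
          Set.indicator_of_notMem (fun h => hω ((hABiff i ω).mpr h))]
    have hAeq : (A i).indicator (fun _ => (1:ℝ))
        = fun ω => ((B i).indicator (fun _ : ℝ × ℝ => (1:ℝ))) (X i ω, U i ω) := by
      funext ω
      by_cases hω : ω ∈ A i
      · rw [Set.indicator_of_mem hω, Set.indicator_of_mem ((hABiff i ω).mp hω)]
      · rw [Set.indicator_of_notMem hω,
          Set.indicator_of_notMem (fun h => hω ((hABiff i ω).mpr h))]
    have hind1 : IndepFun (Z i) (D.indicator (fun _ => (1:ℝ))) μ := by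
      rw [hZeq]
      exact hcomp _ (measurable_fst.indicator (hBmeas i))
    have hind2 : IndepFun ((A i).indicator (fun _ => (1:ℝ))) (D.indicator (fun _ => (1:ℝ))) μ := by
      rw [hAeq]
      exact hcomp _ (measurable_const.indicator (hBmeas i))
    have hintD : Integrable (D.indicator (fun _ => (1:ℝ))) μ :=
      (integrable_const (1:ℝ)).indicator hDmeas
    have hprod1 : Z i * D.indicator (fun _ => (1:ℝ)) = (E s).indicator (Z i) := by
      funext ω
      rw [hED]
      by_cases h2 : ω ∈ D
      · by_cases h1 : ω ∈ A i
        · rw [Pi.mul_apply, Set.indicator_of_mem h2, mul_one,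
            Set.indicator_of_mem (Set.mem_inter h1 h2)]
        · have hz : Z i ω = 0 := Set.indicator_of_notMem h1 _
          rw [Pi.mul_apply, hz, zero_mul,
            Set.indicator_of_notMem (fun h => h1 h.1)]
      · rw [Pi.mul_apply, Set.indicator_of_notMem h2, mul_zero,
          Set.indicator_of_notMem (fun h => h2 h.2)]
    have hprod2 : (A i).indicator (fun _ => (1:ℝ)) * D.indicator (fun _ => (1:ℝ))
        = (E s).indicator (fun _ => (1:ℝ)) := by
      funext ω
      rw [hED]
      by_cases h1 : ω ∈ A i <;> by_cases h2 : ω ∈ D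
      · rw [Pi.mul_apply, Set.indicator_of_mem h1, Set.indicator_of_mem h2,
          Set.indicator_of_mem (Set.mem_inter h1 h2), mul_one]
      · rw [Pi.mul_apply, Set.indicator_of_notMem h2, mul_zero,
          Set.indicator_of_notMem (fun h => h2 h.2)]
      · rw [Pi.mul_apply, Set.indicator_of_notMem h1, zero_mul,
          Set.indicator_of_notMem (fun h => h1 h.1)]
      · rw [Pi.mul_apply, Set.indicator_of_notMem h1, zero_mul,
          Set.indicator_of_notMem (fun h => h1 h.1)]
    have hD1 : integral μ (D.indicator fun _ => (1:ℝ)) = (μ D).toReal :=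
      integral_indicator_one hDmeas
    have hA1 : integral μ ((A i).indicator fun _ => (1:ℝ)) = (μ (A i)).toReal :=
      integral_indicator_one (hAmeas i)
    have hE1 : integral μ ((E s).indicator fun _ => (1:ℝ)) = (μ (E s)).toReal :=
      integral_indicator_one (hEmeas s)
    have e1 : ∫ ω, (E s).indicator (Z i) ω ∂μ = (∫ ω in A i, X i ω ∂μ) * (μ D).toReal := by
      rw [← hprod1]
      rw [hind1.integral_mul_eq_mul_integral (hZint i).aestronglyMeasurable hintD.aestronglyMeasurable, hD1]
      congr 1
      exact integral_indicator (hAmeas i)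
    have e3 : (μ (E s)).toReal = (μ (A i)).toReal * (μ D).toReal := by
      rw [← hE1, ← hprod2,
        hind2.integral_mul_eq_mul_integral ((integrable_const (1:ℝ)).indicator (hAmeas i)).aestronglyMeasurable hintD.aestronglyMeasurable,
        hA1, hD1]
    rw [e1, e3, hc]
    by_cases ht : (μ (A i)).toReal = 0
    · have h0 : μ (A i) = 0 := by
        rcases (ENNReal.toReal_eq_zero_iff _).mp ht with h | h
        · exact h
        · exact absurd h (measure_ne_top μ _)
      have hz : (∫ ω in A i, X i ω ∂μ) = 0 := by
        rw [Measure.restrict_eq_zero.mpr h0]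
        exact integral_zero_measure _
      simp [hz, ht]
    · rw [← mul_assoc, div_mul_cancel₀ _ ht]
  -- values of the Y-side on each atom
  set v : Finset (Fin n) → ℝ :=
    fun s => F.sup' ne (fun S => ∑ i ∈ S, if i ∈ s then c i else 0) with hv
  have hYs : ∀ s, ∀ ω ∈ E s, ∀ S : Finset (Fin n),
      (∑ i ∈ S, Y i ω) = ∑ i ∈ S, if i ∈ s then c i else 0 := by
    intro s ω hω S
    refine Finset.sum_congr rfl fun i _ => ?_
    rw [hY i]
    by_cases hi : i ∈ s
    · rw [Set.indicator_of_mem ((hω i).mpr hi), if_pos hi, hc]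
    · rw [Set.indicator_of_notMem (fun h => hi ((hω i).mp h)), if_neg hi]
  have hLHS : ∫ ω, F.sup' ne (fun S => ∑ i ∈ S, Y i ω) ∂μ
      = ∑ s : Finset (Fin n), v s * (μ (E s)).toReal := by
    have hfun : (fun ω => F.sup' ne (fun S => ∑ i ∈ S, Y i ω))
        = fun ω => ∑ s : Finset (Fin n), (E s).indicator (fun _ => v s) ω := by
      funext ω
      rw [Finset.sum_eq_single (Bof ω)]
      · rw [Set.indicator_of_mem (hBofmem ω)]
        exact Finset.sup'_congr ne rfl (fun S _ => hYs (Bof ω) ω (hBofmem ω) S)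
      · intro s _ hs
        exact Set.indicator_of_notMem (fun h => hs (hBofuniq ω s h)) _
      · intro h; exact absurd (Finset.mem_univ _) h
    rw [hfun, integral_finset_sum _ (fun s _ => (integrable_const (v s)).indicator (hEmeas s))]
    refine Finset.sum_congr rfl fun s _ => ?_
    rw [integral_indicator_const _ (hEmeas s), smul_eq_mul, mul_comm]
    rfl
  -- measurability and integrability of the maxima
  have hmeasmax : ∀ (W : Fin n → Ω → ℝ), (∀ i, Measurable (W i)) →
      Measurable (fun ω => F.sup' ne (fun S => ∑ i ∈ S, W i ω)) := by
    intro W hW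
    have heq : (fun ω => F.sup' ne (fun S => ∑ i ∈ S, W i ω))
        = F.sup' ne (fun S ω => ∑ i ∈ S, W i ω) := by
      funext ω; rw [Finset.sup'_apply]
    rw [heq]
    exact Finset.measurable_sup' ne (fun S _ => Finset.measurable_sum S (fun i _ => hW i))
  have hintmax : ∀ (W : Fin n → Ω → ℝ), (∀ i, Measurable (W i)) →
      (∀ i ω, 0 ≤ W i ω) → (∀ i, Integrable (W i) μ) →
      Integrable (fun ω => F.sup' ne (fun S => ∑ i ∈ S, W i ω)) μ := by
    intro W hW hWpos hWint
    refine Integrable.mono' (integrable_finset_sum Finset.univ (fun i _ => hWint i))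
      ((hmeasmax W hW).aestronglyMeasurable) (Filter.Eventually.of_forall fun ω => ?_)
    rw [Real.norm_eq_abs, abs_of_nonneg]
    · exact Finset.sup'_le ne _ fun S _ =>
        Finset.sum_le_sum_of_subset_of_nonneg (Finset.subset_univ S) (fun i _ _ => hWpos i ω)
    · calc (0:ℝ) = ∑ i ∈ (∅ : Finset (Fin n)), W i ω := by simp
        _ ≤ _ := Finset.le_sup' (fun S => ∑ i ∈ S, W i ω) hemp
  have hintZmax : Integrable (fun ω => F.sup' ne (fun S => ∑ i ∈ S, Z i ω)) μ :=
    hintmax Z hZmeas hZnonneg hZint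
  -- lower bound for the Z-side
  have hRHS : ∑ s : Finset (Fin n), v s * (μ (E s)).toReal
      ≤ ∫ ω, F.sup' ne (fun S => ∑ i ∈ S, Z i ω) ∂μ := by
    have hdec : ∫ ω, F.sup' ne (fun S => ∑ i ∈ S, Z i ω) ∂μ
        = ∑ s : Finset (Fin n),
            ∫ ω, (E s).indicator (fun ω => F.sup' ne (fun S => ∑ i ∈ S, Z i ω)) ω ∂μ := by
      have hsplit : ∫ ω, F.sup' ne (fun S => ∑ i ∈ S, Z i ω) ∂μ
          = ∫ ω, ∑ s : Finset (Fin n),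
              (E s).indicator (fun ω => F.sup' ne (fun S => ∑ i ∈ S, Z i ω)) ω ∂μ := by
        refine integral_congr_ae (Filter.Eventually.of_forall fun ω => ?_)
        show F.sup' ne (fun S => ∑ i ∈ S, Z i ω) = ∑ s : Finset (Fin n),
          (E s).indicator (fun ω => F.sup' ne (fun S => ∑ i ∈ S, Z i ω)) ω
        rw [Finset.sum_eq_single (Bof ω)]
        · exact (Set.indicator_of_mem (hBofmem ω)
            (fun ω => F.sup' ne (fun S => ∑ i ∈ S, Z i ω))).symm
        · intro s _ hs
          exact Set.indicator_of_notMem (fun h => hs ((hBofuniq ω s h))) _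
        · intro h; exact absurd (Finset.mem_univ _) h
      rw [hsplit, integral_finset_sum _ (fun s _ => hintZmax.indicator (hEmeas s))]
    rw [hdec]
    refine Finset.sum_le_sum fun s _ => ?_
    obtain ⟨S₀, hS₀F, hS₀⟩ :=
      Finset.exists_mem_eq_sup' ne (fun S => ∑ i ∈ S, if i ∈ s then c i else 0)
    set T : Finset (Fin n) := S₀.filter (fun i => i ∈ s) with hT
    have hTF : T ∈ F := hdc S₀ hS₀F T (Finset.filter_subset _ _)
    have hvs : v s = ∑ i ∈ T, c i := by
      rw [hT]
      show F.sup' ne (fun S => ∑ i ∈ S, if i ∈ s then c i else 0)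
        = ∑ i ∈ S₀.filter (fun i => i ∈ s), c i
      rw [hS₀, Finset.sum_filter]
    have hsum_int : Integrable ((E s).indicator (fun ω => ∑ i ∈ T, Z i ω)) μ :=
      (integrable_finset_sum T (fun i _ => hZint i)).indicator (hEmeas s)
    calc v s * (μ (E s)).toReal = ∑ i ∈ T, c i * (μ (E s)).toReal := by
          rw [hvs, Finset.sum_mul]
      _ = ∑ i ∈ T, ∫ ω, (E s).indicator (Z i) ω ∂μ := by
          refine Finset.sum_congr rfl fun i hi => ?_
          exact (hkey s i ((Finset.mem_filter.mp hi).2)).symm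
      _ = ∫ ω, (E s).indicator (fun ω => ∑ i ∈ T, Z i ω) ω ∂μ := by
          rw [← integral_finset_sum _ (fun i _ => (hZint i).indicator (hEmeas s))]
          refine integral_congr_ae (Filter.Eventually.of_forall fun ω => ?_)
          by_cases hω : ω ∈ E s
          · simp [Set.indicator_of_mem hω]
          · simp [Set.indicator_of_notMem hω]
      _ ≤ ∫ ω, (E s).indicator (fun ω => F.sup' ne (fun S => ∑ i ∈ S, Z i ω)) ω ∂μ := by
          refine integral_mono hsum_int (hintZmax.indicator (hEmeas s))
            (fun ω => ?_)
          by_cases hω : ω ∈ E s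
          · rw [Set.indicator_of_mem hω, Set.indicator_of_mem hω]
            exact Finset.le_sup' (fun S => ∑ i ∈ S, Z i ω) hTF
          · rw [Set.indicator_of_notMem hω, Set.indicator_of_notMem hω]
  -- pointwise comparison between the Z-side and the X-side
  have hZleX : ∀ ω, F.sup' ne (fun S => ∑ i ∈ S, Z i ω)
      ≤ F.sup' ne (fun S => ∑ i ∈ S, X i ω) := by
    intro ω
    refine Finset.sup'_le ne _ fun S hS => ?_
    have heq : ∑ i ∈ S, Z i ω = ∑ i ∈ S.filter (fun i => ω ∈ A i), X i ω := by
      rw [Finset.sum_filter]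
      refine Finset.sum_congr rfl fun i _ => ?_
      by_cases hi : ω ∈ A i
      · rw [if_pos hi]; exact Set.indicator_of_mem hi _
      · rw [if_neg hi]; exact Set.indicator_of_notMem hi _
    rw [heq]
    exact Finset.le_sup' (fun S => ∑ i ∈ S, X i ω) (hdc S hS _ (Finset.filter_subset _ S))
  have hfin : ∫ ω, F.sup' ne (fun S => ∑ i ∈ S, Z i ω) ∂μ
      ≤ ∫ ω, F.sup' ne (fun S => ∑ i ∈ S, X i ω) ∂μ :=
    integral_mono hintZmax (hintmax X hXmeas hXnonneg hXint) hZleX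
  calc ∫ ω, F.sup' ⟨∅, hemp⟩ (fun S => ∑ i ∈ S, Y i ω) ∂μ
      = ∑ s : Finset (Fin n), v s * (μ (E s)).toReal := hLHS
    _ ≤ ∫ ω, F.sup' ne (fun S => ∑ i ∈ S, Z i ω) ∂μ := hRHS
    _ ≤ ∫ ω, F.sup' ⟨∅, hemp⟩ (fun S => ∑ i ∈ S, X i ω) ∂μ := hfin
end

section
/- Let X_1,…,X_n be nonnegative integrable real random variables on a probability space Ω (not necessarily independent), and let S : Ω → Finset (Fin n) be a measurable selection rule with marginals q_i = P(i ∈ S). Then E[ Σ_{i∈S} X_i ] ≤ Σ_{i=1}^n sup{ E[X_i·φ(X_i)] : φ : ℝ → [0,1] measurable with E[φ(X_i)] ≤ q_i }. (This is the coordinatewise decomposition showing that the value of any ex ante feasible selection rule is bounded by the sum over elements of the optimal single-element fractional acceptance values under the rule's marginal acceptance probabilities, i.e., by Σ_i q_i·F_{D_i}(q_i) in the paper's notation.) -/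
open Finset MeasureTheory

lemma stmt3_integrable_mul {Ω : Type*} [MeasurableSpace Ω] {μ : Measure Ω}
    [IsProbabilityMeasure μ] {X : Ω → ℝ} (hm : Measurable X) (h0 : ∀ ω, 0 ≤ X ω)
    (hint : Integrable X μ) {φ : ℝ → ℝ} (hφm : Measurable φ)
    (hφb : ∀ s, 0 ≤ φ s ∧ φ s ≤ 1) :
    Integrable (fun ω => X ω * φ (X ω)) μ := by
  refine hint.mono' (hm.mul (hφm.comp hm)).aestronglyMeasurable (ae_of_all _ fun ω => ?_)
  have h1 := (hφb (X ω)).1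
  have h2 := (hφb (X ω)).2
  have := h0 ω
  rw [Real.norm_eq_abs, abs_of_nonneg (by positivity)]
  nlinarith

lemma stmt3_key {Ω : Type*} [MeasurableSpace Ω] (μ : Measure Ω) [IsProbabilityMeasure μ]
    (X : Ω → ℝ) (hm : Measurable X) (h0 : ∀ ω, 0 ≤ X ω) (hint : Integrable X μ)
    (A : Set Ω) (hA : MeasurableSet A) :
    ∃ φ : ℝ → ℝ, Measurable φ ∧ (∀ s, 0 ≤ φ s ∧ φ s ≤ 1) ∧
      (∫ ω, φ (X ω) ∂μ) ≤ (μ A).toReal ∧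
      (∫ ω, A.indicator X ω ∂μ) ≤ ∫ ω, X ω * φ (X ω) ∂μ := by
  set q : ℝ := (μ A).toReal with hq
  by_cases hq0 : μ A = 0
  · refine ⟨fun _ => 0, measurable_const, fun s => ⟨le_refl 0, zero_le_one⟩, ?_, ?_⟩
    · simp only [integral_zero]
      exact ENNReal.toReal_nonneg
    · have : ∫ ω, A.indicator X ω ∂μ = 0 := by
        rw [integral_indicator hA, Measure.restrict_eq_zero.mpr hq0, integral_zero_measure]
      simp [this]
  by_cases hq1 : (1:ℝ) ≤ q
  · refine ⟨fun _ => 1, measurable_const, fun s => ⟨zero_le_one, le_refl 1⟩, ?_, ?_⟩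
    · simpa using hq1
    · simp only [mul_one]
      refine integral_mono (hint.indicator hA) hint fun ω => ?_
      exact Set.indicator_le_self' (fun ω _ => h0 ω) ω
  -- main case
  have hq0' : 0 < q := ENNReal.toReal_pos hq0 (measure_ne_top μ A)
  have hqlt1 : q < 1 := lt_of_not_ge hq1
  set f : ℝ → ℝ := fun s => (μ {ω | s < X ω}).toReal with hfdef
  have hmf : ∀ s : ℝ, MeasurableSet {ω | s < X ω} := fun s =>
    measurableSet_lt measurable_const hm
  have hfanti : Antitone f := fun a b hab =>
    ENNReal.toReal_mono (measure_ne_top μ _)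
      (measure_mono fun ω h => lt_of_le_of_lt hab h)
  set T : Set ℝ := {s : ℝ | f s ≤ q} with hTdef
  have hI : 0 ≤ ∫ ω, X ω ∂μ := integral_nonneg h0
  set s₀ : ℝ := (∫ ω, X ω ∂μ) / q + 1 with hs₀
  have hs₀pos : 0 < s₀ := by positivity
  have hTne : T.Nonempty := by
    refine ⟨s₀, ?_⟩
    have hMar := mul_meas_ge_le_integral_of_nonneg (μ := μ) (ae_of_all _ h0) hint s₀
    have h1 : f s₀ ≤ (μ {ω | s₀ ≤ X ω}).toReal :=
      ENNReal.toReal_mono (measure_ne_top μ _) (measure_mono (Set.setOf_subset_setOf.mpr fun ω h => le_of_lt h))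
    have h2 : (μ {ω | s₀ ≤ X ω}).toReal ≤ (∫ ω, X ω ∂μ) / s₀ := by
      rw [le_div_iff₀ hs₀pos]; rw [measureReal_def] at hMar; linarith [hMar]
    have h3 : (∫ ω, X ω ∂μ) / s₀ ≤ q := by
      rw [div_le_iff₀ hs₀pos, hs₀]
      field_simp
      nlinarith
    simp only [hTdef, Set.mem_setOf_eq]
    linarith
  have hTbdd : BddBelow T := by
    refine ⟨0, fun s hs => ?_⟩
    by_contra hneg
    push_neg at hneg
    have : {ω | s < X ω} = Set.univ := by
      ext ω; simp only [Set.mem_setOf_eq, Set.mem_univ, iff_true]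
      exact lt_of_lt_of_le hneg (h0 ω)
    have : f s = 1 := by simp [hfdef, this]
    have := hs
    simp only [hTdef, Set.mem_setOf_eq] at this ⊢
    linarith [hs]
  set t : ℝ := sInf T with htdef
  have ht0 : 0 ≤ t := le_csInf hTne (fun s hs => by
    by_contra hneg
    push_neg at hneg
    have huniv : {ω | s < X ω} = Set.univ := by
      ext ω; simp only [Set.mem_setOf_eq, Set.mem_univ, iff_true]
      exact lt_of_lt_of_le hneg (h0 ω)
    have : f s = 1 := by simp [hfdef, huniv]
    simp only [hTdef, Set.mem_setOf_eq] at hs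
    linarith)
  have hfs : ∀ s, t < s → f s ≤ q := by
    intro s hs
    obtain ⟨u, hu, hus⟩ := (csInf_lt_iff hTbdd hTne).mp hs
    exact le_trans (hfanti (le_of_lt hus)) hu
  have hfs' : ∀ s, s < t → q ≤ f s := by
    intro s hs
    have := notMem_of_lt_csInf hs hTbdd
    simp only [hTdef, Set.mem_setOf_eq] at this
    linarith [lt_of_not_ge this]
  -- right continuity: f t ≤ q
  have h1 : f t ≤ q := by
    have hU : {ω | t < X ω} = ⋃ n : ℕ, {ω | t + 1/(n+1) < X ω} := by
      ext ω
      simp only [Set.mem_setOf_eq, Set.mem_iUnion]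
      constructor
      · intro h
        obtain ⟨n, hn⟩ := exists_nat_one_div_lt (sub_pos.mpr h)
        exact ⟨n, by push_cast at hn ⊢; linarith⟩
      · rintro ⟨n, hn⟩
        have : (0:ℝ) < 1/(n+1) := by positivity
        linarith
    have hmono : Monotone fun n : ℕ => {ω | t + 1/(n+1 : ℝ) < X ω} := by
      intro a b hab ω hω
      simp only [Set.mem_setOf_eq] at hω ⊢
      have : (1:ℝ)/(b+1) ≤ 1/(a+1) := by
        apply one_div_le_one_div_of_le (by positivity)
        push_cast; linarith [(Nat.cast_le (α := ℝ)).mpr hab]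
      linarith
    have := hmono.measure_iUnion (μ := μ)
    rw [← hU] at this
    have hle : μ {ω | t < X ω} ≤ ENNReal.ofReal q := by
      rw [this]
      refine iSup_le fun n => ?_
      rw [← ENNReal.ofReal_toReal (measure_ne_top μ _)]
      exact ENNReal.ofReal_le_ofReal (hfs _ (by
        have : (0:ℝ) < 1/(n+1) := by positivity
        linarith))
    exact ENNReal.toReal_le_of_le_ofReal (le_of_lt hq0') hle
  -- left limit: q ≤ μ {t ≤ X}
  have h2 : q ≤ (μ {ω | t ≤ X ω}).toReal := by
    have hInt : {ω | t ≤ X ω} = ⋂ n : ℕ, {ω | t - 1/(n+1) < X ω} := by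
      ext ω
      simp only [Set.mem_setOf_eq, Set.mem_iInter]
      constructor
      · intro h n
        have : (0:ℝ) < 1/(n+1) := by positivity
        linarith
      · intro h
        by_contra hc
        push_neg at hc
        obtain ⟨n, hn⟩ := exists_nat_one_div_lt (sub_pos.mpr hc)
        have := h n
        push_cast at hn this
        linarith
    have hanti : Antitone fun n : ℕ => {ω | t - 1/(n+1 : ℝ) < X ω} := by
      intro a b hab ω hω
      simp only [Set.mem_setOf_eq] at hω ⊢
      have : (1:ℝ)/(b+1) ≤ 1/(a+1) := by
        apply one_div_le_one_div_of_le (by positivity)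
        push_cast; linarith [(Nat.cast_le (α := ℝ)).mpr hab]
      linarith
    have hmeq := hanti.measure_iInter (μ := μ)
      (fun n => (hmf _).nullMeasurableSet) ⟨0, measure_ne_top μ _⟩
    rw [← hInt] at hmeq
    have hge : ENNReal.ofReal q ≤ μ {ω | t ≤ X ω} := by
      rw [hmeq]
      refine le_iInf fun n => ?_
      rw [← ENNReal.ofReal_toReal (measure_ne_top μ _)]
      refine ENNReal.ofReal_le_ofReal (hfs' _ ?_)
      have : (0:ℝ) < 1/(n+1) := by positivity
      linarith
    calc q = (ENNReal.ofReal q).toReal := by rw [ENNReal.toReal_ofReal (le_of_lt hq0')]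
    _ ≤ (μ {ω | t ≤ X ω}).toReal := ENNReal.toReal_mono (measure_ne_top μ _) hge
  set p : ℝ := (μ {ω | X ω = t}).toReal with hpdef
  have hmeqset : MeasurableSet {ω | X ω = t} := hm (measurableSet_singleton t)
  have hsplit : (μ {ω | t ≤ X ω}).toReal = f t + p := by
    have hseteq : {ω | t ≤ X ω} = {ω | t < X ω} ∪ {ω | X ω = t} := by
      ext ω
      simp only [Set.mem_setOf_eq, Set.mem_union]
      constructor
      · intro h; rcases lt_or_eq_of_le h with h | h
        · exact Or.inl h
        · exact Or.inr h.symm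
      · rintro (h | h)
        · exact le_of_lt h
        · exact le_of_eq h.symm
    have hdis : Disjoint {ω | t < X ω} {ω | X ω = t} := by
      rw [Set.disjoint_left]
      intro ω h1 h2
      simp only [Set.mem_setOf_eq] at h1 h2
      linarith [h1, le_of_eq h2.symm]
    rw [hseteq, measure_union hdis hmeqset,
      ENNReal.toReal_add (measure_ne_top μ _) (measure_ne_top μ _)]
  have hp0 : 0 ≤ p := ENNReal.toReal_nonneg
  have hpq : q - f t ≤ p := by rw [hsplit] at h2; linarith
  set θ : ℝ := if p = 0 then 0 else (q - f t) / p with hθdef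
  have hθ0 : 0 ≤ θ := by
    rw [hθdef]; split_ifs with h
    · exact le_refl 0
    · exact div_nonneg (by linarith) hp0
  have hθ1 : θ ≤ 1 := by
    rw [hθdef]; split_ifs with h
    · exact zero_le_one
    · rw [div_le_one (lt_of_le_of_ne hp0 (Ne.symm h))]; exact hpq
  have hθp : θ * p = q - f t := by
    rw [hθdef]; split_ifs with h
    · rw [h, mul_zero]; rw [h] at hpq; linarith
    · field_simp
  set φ : ℝ → ℝ := fun x => if t < x then 1 else if x = t then θ else 0 with hφdef
  have hφm : Measurable φ := by
    apply Measurable.ite (measurableSet_lt measurable_const measurable_id) measurable_const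
    exact Measurable.ite (measurableSet_eq_fun measurable_id measurable_const)
      measurable_const measurable_const
  have hφb : ∀ s, 0 ≤ φ s ∧ φ s ≤ 1 := by
    intro s
    rw [hφdef]
    constructor <;> simp only <;> split_ifs <;> first | exact hθ0 | exact hθ1 | norm_num
  have hgeq : (fun ω => φ (X ω)) =
      fun ω => Set.indicator {ω | t < X ω} (fun _ => (1:ℝ)) ω
        + θ * Set.indicator {ω | X ω = t} (fun _ => (1:ℝ)) ω := by
    funext ω
    rw [hφdef]
    by_cases h1 : t < X ω
    · have h2 : ¬ X ω = t := by intro h; rw [h] at h1; exact lt_irrefl t h1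
      simp [Set.indicator, h1, h2]
    · by_cases h2 : X ω = t
      · simp [Set.indicator, h1, h2]
      · simp [Set.indicator, h1, h2]
  have hi1 : Integrable (Set.indicator {ω | t < X ω} (fun _ => (1:ℝ))) μ :=
    (integrable_const 1).indicator (hmf t)
  have hi2 : Integrable (Set.indicator {ω | X ω = t} (fun _ => (1:ℝ))) μ :=
    (integrable_const 1).indicator hmeqset
  have hgint : Integrable (fun ω => φ (X ω)) μ := by
    rw [hgeq]; exact hi1.add (hi2.const_mul θ)
  have hgI : ∫ ω, φ (X ω) ∂μ = q := by
    rw [hgeq]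
    rw [integral_add hi1 (hi2.const_mul θ), integral_const_mul,
      integral_indicator_const (1:ℝ) (hmf t), integral_indicator_const (1:ℝ) hmeqset]
    simp only [smul_eq_mul, mul_one]
    show f t + θ * p = q
    linarith [hθp]
  refine ⟨φ, hφm, hφb, le_of_eq hgI, ?_⟩
  have hXgint : Integrable (fun ω => X ω * φ (X ω)) μ :=
    stmt3_integrable_mul hm h0 hint hφm hφb
  have hindint : Integrable (A.indicator X) μ := hint.indicator hA
  have hiAone : Integrable (A.indicator (fun _ => (1:ℝ))) μ := (integrable_const 1).indicator hA
  have hpoint : ∀ ω, t * (φ (X ω) - A.indicator (fun _ => (1:ℝ)) ω)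
      ≤ X ω * φ (X ω) - A.indicator X ω := by
    intro ω
    have ha : A.indicator X ω = X ω * A.indicator (fun _ => (1:ℝ)) ω := by
      by_cases h : ω ∈ A <;> simp [h]
    set a : ℝ := A.indicator (fun _ => (1:ℝ)) ω with hadef
    have ha0 : 0 ≤ a := by rw [hadef]; by_cases h : ω ∈ A <;> simp [h]
    have ha1 : a ≤ 1 := by rw [hadef]; by_cases h : ω ∈ A <;> simp [h]
    rw [ha]
    rcases lt_trichotomy (X ω) t with h | h | h
    · have hg : φ (X ω) = 0 := by
        rw [hφdef]; simp only
        rw [if_neg (by linarith), if_neg (by linarith [h.ne])]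
      rw [hg]
      nlinarith [h0 ω]
    · have : X ω = t := h
      rw [this]
      ring_nf
      nlinarith [hφb t, ha0, ha1]
    · have hg : φ (X ω) = 1 := by rw [hφdef]; simp only [if_pos h]
      rw [hg]
      nlinarith
  have hlhs : ∫ ω, t * (φ (X ω) - A.indicator (fun _ => (1:ℝ)) ω) ∂μ = 0 := by
    rw [integral_const_mul, integral_sub hgint hiAone, hgI,
      integral_indicator_const (1:ℝ) hA]
    simp [hq, measureReal_def]
  have hrhs : ∫ ω, (X ω * φ (X ω) - A.indicator X ω) ∂μ
      = (∫ ω, X ω * φ (X ω) ∂μ) - ∫ ω, A.indicator X ω ∂μ :=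
    integral_sub hXgint hindint
  have hLint : Integrable (fun ω => t * (φ (X ω) - A.indicator (fun _ => (1:ℝ)) ω)) μ :=
    (hgint.sub hiAone).const_mul t
  have hRint : Integrable (fun ω => X ω * φ (X ω) - A.indicator X ω) μ :=
    hXgint.sub hindint
  have hmono := integral_mono hLint hRint hpoint
  rw [hlhs, hrhs] at hmono
  linarith

/-- The value of any ex ante feasible selection rule is bounded by the sum over
elements of the optimal single-element fractional acceptance values under the
rule's marginal acceptance probabilities. -/
theorem stmt3 (n : ℕ) {Ω : Type*} [MeasurableSpace Ω] (μ : Measure Ω)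
    [IsProbabilityMeasure μ]
    (X : Fin n → Ω → ℝ) (hXmeas : ∀ i, Measurable (X i))
    (hXnonneg : ∀ i ω, 0 ≤ X i ω) (hXint : ∀ i, Integrable (X i) μ)
    (S : Ω → Finset (Fin n)) (hSmeas : ∀ i, MeasurableSet {ω | i ∈ S ω}) :
    (∫ ω, ∑ i ∈ S ω, X i ω ∂μ)
      ≤ ∑ i : Fin n, sSup {v : ℝ | ∃ φ : ℝ → ℝ, Measurable φ ∧
          (∀ s, 0 ≤ φ s ∧ φ s ≤ 1) ∧
          (∫ ω, φ (X i ω) ∂μ) ≤ (μ {ω | i ∈ S ω}).toReal ∧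
          v = ∫ ω, X i ω * φ (X i ω) ∂μ} := by
  have hrw : ∀ ω, ∑ i ∈ S ω, X i ω
      = ∑ i : Fin n, ({ω' | i ∈ S ω'}).indicator (X i) ω := by
    intro ω
    have : ∀ i : Fin n, ({ω' | i ∈ S ω'}).indicator (X i) ω
        = if i ∈ S ω then X i ω else 0 := by
      intro i
      by_cases h : i ∈ S ω <;> simp [Set.indicator, h]
    simp_rw [this]
    rw [Finset.sum_ite_mem, Finset.univ_inter]
  have hstep : (∫ ω, ∑ i ∈ S ω, X i ω ∂μ)
      = ∑ i : Fin n, ∫ ω, ({ω' | i ∈ S ω'}).indicator (X i) ω ∂μ := by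
    rw [← integral_finset_sum _ (fun i _ => (hXint i).indicator (hSmeas i))]
    exact integral_congr_ae (ae_of_all _ hrw)
  rw [hstep]
  refine Finset.sum_le_sum fun i _ => ?_
  obtain ⟨φ, hφm, hφb, hφc, hφv⟩ := stmt3_key μ (X i) (hXmeas i) (hXnonneg i) (hXint i)
    {ω | i ∈ S ω} (hSmeas i)
  have hbdd : BddAbove {v : ℝ | ∃ φ : ℝ → ℝ, Measurable φ ∧
      (∀ s, 0 ≤ φ s ∧ φ s ≤ 1) ∧
      (∫ ω, φ (X i ω) ∂μ) ≤ (μ {ω | i ∈ S ω}).toReal ∧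
      v = ∫ ω, X i ω * φ (X i ω) ∂μ} := by
    refine ⟨∫ ω, X i ω ∂μ, ?_⟩
    rintro v ⟨ψ, hψm, hψb, hψc, rfl⟩
    refine integral_mono (stmt3_integrable_mul (hXmeas i) (hXnonneg i) (hXint i) hψm hψb)
      (hXint i) fun ω => ?_
    nlinarith [hψb (X i ω), hXnonneg i ω, (hψb (X i ω)).1, (hψb (X i ω)).2]
  refine le_trans hφv (le_csSup hbdd ⟨φ, hφm, hφb, hφc, rfl⟩)
end

section
/- Let F be a family of subsets of Fin n that is downward closed (T ⊆ S and S ∈ F imply T ∈ F) and contains the empty set, and let c ≥ 1 be a real number such that for every x ∈ P(F) and every y : Fin n → ℝ with y ≥ 0 coordinatewise, Σ_{i=1}^n x_i·y_i ≤ c · E[ max over S ∈ F with S ⊆ R(x) of Σ_{i∈S} y_i ]. Then for every tuple of independent nonnegative integrable random variables X_1,…,X_n on a probability space Ω and every measurable selection rule S : Ω → Finset (Fin n) whose marginal vector (P(1∈S),…,P(n∈S)) lies in P(F), one has E[ Σ_{i∈S} X_i ] ≤ c · E[ max_{T∈F} Σ_{i∈T} X_i ]. (This is the direction of the paper's Lemma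 stating that the gap between the ex ante and ex post optima of any Bayesian combinatorial selection instance over F is bounded by the correlation gap of F.) -/
open Finset MeasureTheory ProbabilityTheory

lemma stmt4_prod_integral {Ω : Type*} {mΩ : MeasurableSpace Ω} (μ : Measure Ω)
    [IsProbabilityMeasure μ] {ι : Type*} (m : ι → MeasurableSpace Ω)
    (hle : ∀ i, m i ≤ mΩ) (hindep : iIndep m μ) (f : ι → Ω → ℝ)
    (hmeas : ∀ i, Measurable[m i] (f i)) (hint : ∀ i, Integrable (f i) μ) :
    ∀ s : Finset ι, Integrable (fun ω => ∏ j ∈ s, f j ω) μ ∧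
      ∫ ω, ∏ j ∈ s, f j ω ∂μ = ∏ j ∈ s, ∫ ω, f j ω ∂μ := by
  intro s
  classical
  induction s using Finset.cons_induction with
  | empty => simp
  | cons a s ha ih =>
    have hprodmeas : Measurable[⨆ i ∈ (↑s : Set ι), m i] (fun ω => ∏ j ∈ s, f j ω) :=
      Finset.measurable_prod _ fun j hj =>
        (hmeas j).mono (le_biSup m (by simpa using hj)) le_rfl
    have hIF : IndepFun (f a) (fun ω => ∏ j ∈ s, f j ω) μ := by
      rw [IndepFun_iff_Indep]
      have h := indep_iSup_of_disjoint (S := ({a} : Set ι)) (T := (↑s : Set ι))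
        hle hindep (by simpa using ha)
      refine indep_of_indep_of_le_right (indep_of_indep_of_le_left h ?_) ?_
      · exact (hmeas a).comap_le.trans (le_biSup m (Set.mem_singleton a))
      · exact hprodmeas.comap_le
    have hfun : (fun ω => ∏ j ∈ Finset.cons a s ha, f j ω)
        = f a * fun ω => ∏ j ∈ s, f j ω := by
      funext ω; simp [Finset.prod_cons, Finset.prod_insert ha]
    constructor
    · rw [hfun]; exact hIF.integrable_mul (hint a) ih.1
    · rw [Finset.prod_cons, ← ih.2, hfun]
      exact hIF.integral_mul_eq_mul_integral (hint a).aestronglyMeasurable ih.1.aestronglyMeasurable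

/-- If the correlation gap of `F` is at most `c`, then for every Bayesian combinatorial
selection instance over `F` (independent nonnegative integrable values) the value of any
ex ante feasible selection rule is at most `c` times the ex post optimum. -/
theorem stmt4 (n : ℕ) (F : Finset (Finset (Fin n)))
    (hdc : ∀ S ∈ F, ∀ T ⊆ S, T ∈ F) (hemp : ∅ ∈ F)
    (c : ℝ) (hc : 1 ≤ c)
    (hcor : ∀ x ∈ convexHull ℝ
        {v : Fin n → ℝ | ∃ S ∈ F, v = fun i => if i ∈ S then (1 : ℝ) else 0},
      ∀ y : Fin n → ℝ, (∀ i, 0 ≤ y i) →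
        ∑ i : Fin n, x i * y i
          ≤ c * ∑ A ∈ (Finset.univ : Finset (Fin n)).powerset,
              ((∏ i ∈ A, x i) * ∏ i ∈ Aᶜ, (1 - x i)) *
                (F.filter (fun S => S ⊆ A)).sup'
                  ⟨∅, Finset.mem_filter.mpr ⟨hemp, Finset.empty_subset _⟩⟩
                  (fun S => ∑ i ∈ S, y i))
    {Ω : Type*} [MeasurableSpace Ω] (μ : Measure Ω) [IsProbabilityMeasure μ]
    (X : Fin n → Ω → ℝ) (hXmeas : ∀ i, Measurable (X i))
    (hindep : iIndepFun X μ)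
    (hXnonneg : ∀ i ω, 0 ≤ X i ω) (hXint : ∀ i, Integrable (X i) μ)
    (S : Ω → Finset (Fin n)) (hSmeas : ∀ i, MeasurableSet {ω | i ∈ S ω})
    (hfeas : (fun i => (μ {ω | i ∈ S ω}).toReal) ∈ convexHull ℝ
        {v : Fin n → ℝ | ∃ S ∈ F, v = fun i => if i ∈ S then (1 : ℝ) else 0}) :
    (∫ ω, ∑ i ∈ S ω, X i ω ∂μ)
      ≤ c * ∫ ω, F.sup' ⟨∅, hemp⟩ (fun T => ∑ i ∈ T, X i ω) ∂μ := by
  classical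
  -- basic objects
  let m : Fin n → MeasurableSpace Ω := fun i => MeasurableSpace.comap (X i) inferInstance
  have hm : ∀ i, m i ≤ ‹MeasurableSpace Ω› := fun i => (hXmeas i).comap_le
  have hXmi : ∀ i, Measurable[m i] (X i) := fun i => comap_measurable (X i)
  have hiIndep : iIndep m μ := hindep.iIndep
  let B : Fin n → Set Ω := fun i => {ω | i ∈ S ω}
  have hBmeas : ∀ i, MeasurableSet (B i) := hSmeas
  let q : Fin n → ℝ := fun i => (μ (B i)).toReal
  let ind : Fin n → Ω → ℝ := fun i => (B i).indicator (fun _ => (1 : ℝ))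
  have hind_int : ∀ i, Integrable (ind i) μ := fun i =>
    (integrable_const (1 : ℝ)).indicator (hBmeas i)
  let p : Fin n → Ω → ℝ := fun i => μ[ind i | m i]
  have hp_int : ∀ i, Integrable (p i) μ := fun i => integrable_condExp
  have hp_mi : ∀ i, Measurable[m i] (p i) := fun i =>
    (stronglyMeasurable_condExp (m := m i)).measurable
  have hp_meas : ∀ i, Measurable (p i) := fun i => (hp_mi i).mono (hm i) le_rfl
  have hp0 : ∀ i, 0 ≤ᵐ[μ] p i := fun i =>
    condExp_nonneg (Filter.Eventually.of_forall fun ω =>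
      Set.indicator_nonneg (fun _ _ => zero_le_one) ω)
  have hp1 : ∀ i, p i ≤ᵐ[μ] fun _ => (1 : ℝ) := by
    intro i
    have h := condExp_mono (m := m i) (μ := μ) (hind_int i) (integrable_const (1 : ℝ))
      (Filter.Eventually.of_forall fun ω =>
        Set.indicator_le_self' (fun _ _ => zero_le_one) ω)
    calc p i ≤ᵐ[μ] μ[(fun _ => (1 : ℝ)) | m i] := h
      _ = fun _ => (1 : ℝ) := condExp_const (hm i) 1
  have hpq : ∀ i, ∫ ω, p i ω ∂μ = q i := by
    intro i
    rw [show (∫ ω, p i ω ∂μ) = ∫ ω, (μ[ind i | m i]) ω ∂μ from rfl,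
      integral_condExp (hm i)]
    rw [show (∫ ω, ind i ω ∂μ) = ∫ ω, (B i).indicator (fun _ => (1:ℝ)) ω ∂μ from rfl,
      integral_indicator_const (1 : ℝ) (hBmeas i)]
    simp [q, measureReal_def]
  -- pull-out property
  have hXind_eq : ∀ i, (fun ω => X i ω * ind i ω) = (B i).indicator (X i) := by
    intro i; funext ω
    by_cases h : ω ∈ B i <;> simp [ind, Set.indicator_apply, h]
  have hXind_int : ∀ i, Integrable (fun ω => X i ω * ind i ω) μ := by
    intro i; rw [hXind_eq i]; exact (hXint i).indicator (hBmeas i)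
  have hXp : ∀ i, ∫ ω, X i ω * p i ω ∂μ = ∫ ω, (B i).indicator (X i) ω ∂μ := by
    intro i
    have hmul := condExp_mul_of_stronglyMeasurable_left (m := m i) (μ := μ)
      ((hXmi i).stronglyMeasurable) (by exact hXind_int i) (hind_int i)
    have h1 : ∫ ω, X i ω * p i ω ∂μ = ∫ ω, (μ[(X i * ind i) | m i]) ω ∂μ :=
      integral_congr_ae (hmul.mono fun ω h => by
        simp only [Pi.mul_apply] at h ⊢; exact h.symm)
    rw [h1, integral_condExp (hm i), ← hXind_eq i]
    exact integral_congr_ae (Filter.Eventually.of_forall fun ω => rfl)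
  -- the ex ante vector y
  let y : Fin n → ℝ := fun i => if q i = 0 then 0 else (∫ ω, X i ω * p i ω ∂μ) / q i
  have hXp_nonneg : ∀ i, 0 ≤ ∫ ω, X i ω * p i ω ∂μ := fun i =>
    integral_nonneg_of_ae ((hp0 i).mono fun ω h => mul_nonneg (hXnonneg i ω) h)
  have hy0 : ∀ i, 0 ≤ y i := by
    intro i
    by_cases h : q i = 0
    · simp [y, h]
    · simp only [y, h, if_false]
      exact div_nonneg (hXp_nonneg i) ENNReal.toReal_nonneg
  have hqy : ∀ i, q i * y i = ∫ ω, X i ω * p i ω ∂μ := by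
    intro i
    by_cases h : q i = 0
    · simp only [y, h, if_true, mul_zero, zero_mul]
      have hint0 : ∫ ω, p i ω ∂μ = 0 := by rw [hpq i, h]
      have hp_zero : p i =ᵐ[μ] 0 :=
        (integral_eq_zero_iff_of_nonneg_ae (hp0 i) (hp_int i)).mp hint0
      symm
      refine integral_eq_zero_of_ae (hp_zero.mono fun ω hω => ?_)
      simp [hω]
    · simp only [y, h, if_false]
      field_simp
  -- step 1
  have step1 : ∫ ω, ∑ i ∈ S ω, X i ω ∂μ = ∑ i : Fin n, q i * y i := by
    have h1 : ∀ ω, ∑ i ∈ S ω, X i ω = ∑ i : Fin n, (B i).indicator (X i) ω := by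
      intro ω
      have : ∑ i : Fin n, (B i).indicator (X i) ω
          = ∑ i : Fin n, if i ∈ S ω then X i ω else 0 := by
        refine Finset.sum_congr rfl fun i _ => ?_
        simp [B, Set.indicator_apply]
      rw [this, Finset.sum_ite_mem, Finset.univ_inter]
    calc ∫ ω, ∑ i ∈ S ω, X i ω ∂μ
        = ∫ ω, ∑ i : Fin n, (B i).indicator (X i) ω ∂μ :=
          integral_congr_ae (Filter.Eventually.of_forall h1)
      _ = ∑ i : Fin n, ∫ ω, (B i).indicator (X i) ω ∂μ :=
          integral_finset_sum _ fun i _ => (hXint i).indicator (hBmeas i)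
      _ = ∑ i : Fin n, q i * y i := by
          refine Finset.sum_congr rfl fun i _ => ?_
          rw [hqy i, hXp i]
  -- MAX
  let MAX : Ω → ℝ := fun ω => F.sup' ⟨∅, hemp⟩ fun T => ∑ i ∈ T, X i ω
  have hMAXmeas : Measurable MAX := by
    have : MAX = F.sup' ⟨∅, hemp⟩ (fun T ω => ∑ i ∈ T, X i ω) := by
      funext ω; exact (Finset.sup'_apply (C := fun _ => ℝ) (s := F) ⟨∅, hemp⟩ (fun T ω => ∑ i ∈ T, X i ω) ω).symm
    rw [this]
    exact Finset.measurable_sup' _ fun T _ => Finset.measurable_sum _ fun i _ => hXmeas i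
  have hMAX0 : ∀ ω, 0 ≤ MAX ω := fun ω => by
    have h := Finset.le_sup' (fun T => ∑ i ∈ T, X i ω) hemp
    simp only [Finset.sum_empty] at h
    exact h
  have hMAXle : ∀ ω, MAX ω ≤ ∑ i : Fin n, X i ω := fun ω =>
    Finset.sup'_le _ _ fun T _ =>
      Finset.sum_le_sum_of_subset_of_nonneg (Finset.subset_univ T)
        fun i _ _ => hXnonneg i ω
  have hsum_int : Integrable (fun ω => ∑ i : Fin n, X i ω) μ :=
    integrable_finset_sum _ fun i _ => hXint i
  -- g and G
  let g : Finset (Fin n) → Fin n → Ω → ℝ :=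
    fun A j ω => if j ∈ A then p j ω else 1 - p j ω
  have hg_mi : ∀ A j, Measurable[m j] (g A j) := by
    intro A j
    by_cases h : j ∈ A <;> simp only [g, h, if_true, if_false]
    · exact hp_mi j
    · exact measurable_const.sub (hp_mi j)
  have hg_int : ∀ A j, Integrable (g A j) μ := by
    intro A j
    by_cases h : j ∈ A <;> simp only [g, h, if_true, if_false]
    · exact hp_int j
    · exact (integrable_const (1 : ℝ)).sub (hp_int j)
  have hg_intg : ∀ A j, ∫ ω, g A j ω ∂μ = if j ∈ A then q j else 1 - q j := by
    intro A j
    by_cases h : j ∈ A <;> simp only [g, h, if_true, if_false]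
    · exact hpq j
    · rw [integral_sub (integrable_const (1 : ℝ)) (hp_int j), hpq j]
      simp
  have hg0 : ∀ A j, 0 ≤ᵐ[μ] g A j := by
    intro A j
    by_cases h : j ∈ A <;> simp only [g, h, if_true, if_false]
    · exact hp0 j
    · refine (hp1 j).mono fun ω hω => ?_
      have h1 : p j ω ≤ 1 := hω
      simp only [Pi.zero_apply]
      linarith
  have hg1 : ∀ A j, ∀ᵐ ω ∂μ, g A j ω ≤ 1 := by
    intro A j
    by_cases h : j ∈ A <;> simp only [g, h, if_true, if_false]
    · exact hp1 j
    · refine (hp0 j).mono fun ω hω => ?_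
      have h1 : (0:ℝ) ≤ p j ω := hω
      linarith
  let G : Finset (Fin n) → Ω → ℝ := fun A ω => ∏ j : Fin n, g A j ω
  have hG0 : ∀ A, 0 ≤ᵐ[μ] G A := by
    intro A
    have h := MeasureTheory.ae_all_iff.mpr fun j => hg0 A j
    exact h.mono fun ω hω => Finset.prod_nonneg fun j _ => hω j
  have hG1 : ∀ A, ∀ᵐ ω ∂μ, G A ω ≤ 1 := by
    intro A
    have h0 := MeasureTheory.ae_all_iff.mpr fun j => hg0 A j
    have h1 := MeasureTheory.ae_all_iff.mpr fun j => hg1 A j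
    filter_upwards [h0, h1] with ω hω0 hω1
    exact Finset.prod_le_one (fun j _ => hω0 j) fun j _ => hω1 j
  have hGmeas : ∀ A, Measurable (G A) := fun A =>
    Finset.measurable_prod _ fun j _ => (hg_mi A j).mono (hm j) le_rfl
  have hGkey := fun A =>
    stmt4_prod_integral μ m hm hiIndep (g A) (hg_mi A) (hg_int A) Finset.univ
  -- the weight identity
  have hW : ∀ A : Finset (Fin n),
      (∏ j : Fin n, ∫ ω, g A j ω ∂μ) = (∏ i ∈ A, q i) * ∏ i ∈ Aᶜ, (1 - q i) := by
    intro A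
    rw [← Finset.prod_filter_mul_prod_filter_not Finset.univ (· ∈ A)]
    congr 1
    · refine Finset.prod_congr (by ext j; simp) fun j hj => ?_
      rw [hg_intg]; simp [hj]
    · refine Finset.prod_congr (by ext j; simp [Finset.mem_compl]) fun j hj => ?_
      rw [hg_intg]; simp [Finset.mem_compl.mp hj]
  -- integrability of MAX * G A
  have hMG_int : ∀ A, Integrable (fun ω => MAX ω * G A ω) μ := by
    intro A
    refine hsum_int.mono' ((hMAXmeas.mul (hGmeas A)).aestronglyMeasurable) ?_
    filter_upwards [hG0 A, hG1 A] with ω h0 h1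
    rw [Real.norm_eq_abs, abs_mul, abs_of_nonneg (hMAX0 ω), abs_of_nonneg h0]
    calc MAX ω * G A ω ≤ MAX ω * 1 := mul_le_mul_of_nonneg_left h1 (hMAX0 ω)
      _ = MAX ω := mul_one _
      _ ≤ _ := hMAXle ω
  -- X i * p i facts
  have hXp_mi : ∀ i, Measurable[m i] (fun ω => X i ω * p i ω) := fun i =>
    (hXmi i).mul (hp_mi i)
  have hXp_int : ∀ i, Integrable (fun ω => X i ω * p i ω) μ := by
    intro i
    refine (hXint i).abs.mono' ((hXmeas i).mul (hp_meas i)).aestronglyMeasurable ?_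
    filter_upwards [hp0 i, hp1 i] with ω h0 h1
    rw [Real.norm_eq_abs, abs_mul]
    calc |X i ω| * |p i ω| ≤ |X i ω| * 1 := by
          refine mul_le_mul_of_nonneg_left ?_ (abs_nonneg _)
          rw [abs_of_nonneg h0]; exact h1
      _ = |X i ω| := mul_one _
  -- key per-A bound
  have key : ∀ A ∈ (Finset.univ : Finset (Fin n)).powerset,
      ((∏ i ∈ A, q i) * ∏ i ∈ Aᶜ, (1 - q i)) *
        (F.filter (fun S => S ⊆ A)).sup'
          ⟨∅, Finset.mem_filter.mpr ⟨hemp, Finset.empty_subset _⟩⟩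
          (fun S => ∑ i ∈ S, y i)
      ≤ ∫ ω, MAX ω * G A ω ∂μ := by
    intro A _
    obtain ⟨T, hT, hTsup⟩ := Finset.exists_mem_eq_sup'
      (⟨∅, Finset.mem_filter.mpr ⟨hemp, Finset.empty_subset _⟩⟩ :
        (F.filter (fun S => S ⊆ A)).Nonempty)
      (fun S => ∑ i ∈ S, y i)
    have hTF : T ∈ F := (Finset.mem_filter.mp hT).1
    have hTA : T ⊆ A := (Finset.mem_filter.mp hT).2
    rw [hTsup, ← hW A, Finset.mul_sum]
    have hterm : ∀ i ∈ T,
        Integrable (fun ω => X i ω * G A ω) μ ∧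
        (∏ j : Fin n, ∫ ω, g A j ω ∂μ) * y i = ∫ ω, X i ω * G A ω ∂μ := by
      intro i hiT
      have hiA : i ∈ A := hTA hiT
      set g' : Fin n → Ω → ℝ :=
        fun j => if j = i then (fun ω => X i ω * p i ω) else g A j with hg'
      have hg'_mi : ∀ j, Measurable[m j] (g' j) := by
        intro j
        by_cases h : j = i
        · subst h; simp only [g', if_true]; exact hXp_mi j
        · simp only [g', h, if_false]; exact hg_mi A j
      have hg'_int : ∀ j, Integrable (g' j) μ := by
        intro j
        by_cases h : j = i
        · subst h; simp only [g', if_true]; exact hXp_int j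
        · simp only [g', h, if_false]; exact hg_int A j
      have h1 := stmt4_prod_integral μ m hm hiIndep g' hg'_mi hg'_int Finset.univ
      have hpt : (fun ω => ∏ j : Fin n, g' j ω) = fun ω => X i ω * G A ω := by
        funext ω
        rw [← Finset.mul_prod_erase Finset.univ (fun j => g' j ω) (Finset.mem_univ i),
          show G A ω = ∏ j : Fin n, g A j ω from rfl,
          ← Finset.mul_prod_erase Finset.univ (fun j => g A j ω) (Finset.mem_univ i)]
        have herase : ∏ j ∈ Finset.univ.erase i, g' j ω
            = ∏ j ∈ Finset.univ.erase i, g A j ω := by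
          refine Finset.prod_congr rfl fun j hj => ?_
          simp only [g', (Finset.mem_erase.mp hj).1, if_false]
        rw [herase]
        simp only [g', if_pos rfl, g, if_pos hiA]
        ring
      constructor
      · rw [← hpt]; exact h1.1
      · have h2 : ∫ ω, X i ω * G A ω ∂μ = ∏ j : Fin n, ∫ ω, g' j ω ∂μ := by
          rw [← hpt]; exact h1.2
        rw [h2,
          ← Finset.mul_prod_erase Finset.univ (fun j => ∫ ω, g' j ω ∂μ) (Finset.mem_univ i),
          ← Finset.mul_prod_erase Finset.univ (fun j => ∫ ω, g A j ω ∂μ) (Finset.mem_univ i)]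
        have herase2 : ∏ j ∈ Finset.univ.erase i, ∫ ω, g' j ω ∂μ
            = ∏ j ∈ Finset.univ.erase i, ∫ ω, g A j ω ∂μ := by
          refine Finset.prod_congr rfl fun j hj => ?_
          refine integral_congr_ae (Filter.Eventually.of_forall fun ω => ?_)
          simp only [g', (Finset.mem_erase.mp hj).1, if_false]
        rw [herase2]
        have hgi : ∫ ω, g A i ω ∂μ = q i := by rw [hg_intg]; simp [hiA]
        have hg'i : ∫ ω, g' i ω ∂μ = ∫ ω, X i ω * p i ω ∂μ := by
          refine integral_congr_ae (Filter.Eventually.of_forall fun ω => ?_)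
          simp only [g', if_pos rfl]
        rw [hgi, hg'i, ← hqy i]
        ring
    calc ∑ i ∈ T, (∏ j : Fin n, ∫ ω, g A j ω ∂μ) * y i
        = ∑ i ∈ T, ∫ ω, X i ω * G A ω ∂μ :=
          Finset.sum_congr rfl fun i hi => (hterm i hi).2
      _ = ∫ ω, ∑ i ∈ T, X i ω * G A ω ∂μ :=
          (integral_finset_sum T fun i hi => (hterm i hi).1).symm
      _ ≤ ∫ ω, MAX ω * G A ω ∂μ := by
          refine integral_mono_ae (integrable_finset_sum T fun i hi => (hterm i hi).1)
            (hMG_int A) ?_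
          filter_upwards [hG0 A] with ω h0
          rw [← Finset.sum_mul]
          exact mul_le_mul_of_nonneg_right
            (Finset.le_sup' (fun T => ∑ i ∈ T, X i ω) hTF) h0
  -- summation over A
  have hGsplit : ∀ (A : Finset (Fin n)) (ω : Ω),
      G A ω = (∏ j ∈ A, p j ω) * ∏ j ∈ Finset.univ \ A, (1 - p j ω) := by
    intro A ω
    rw [show G A ω = ∏ j ∈ Finset.univ, (if j ∈ A then p j ω else 1 - p j ω) from rfl,
      ← Finset.prod_filter_mul_prod_filter_not Finset.univ (· ∈ A)]
    congr 1
    · refine Finset.prod_congr (by ext j; simp) fun j hj => ?_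
      simp [hj]
    · refine Finset.prod_congr (by ext j; simp [Finset.mem_sdiff]) fun j hj => ?_
      simp [(Finset.mem_sdiff.mp hj).2]
  have hGsum1 : ∀ ω, ∑ A ∈ (Finset.univ : Finset (Fin n)).powerset, G A ω = 1 := by
    intro ω
    calc ∑ A ∈ (Finset.univ : Finset (Fin n)).powerset, G A ω
        = ∑ t ∈ (Finset.univ : Finset (Fin n)).powerset,
            (∏ i ∈ t, p i ω) * ∏ i ∈ Finset.univ \ t, (1 - p i ω) :=
          Finset.sum_congr rfl fun A _ => hGsplit A ω
      _ = ∏ j : Fin n, (p j ω + (1 - p j ω)) :=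
          (Finset.prod_add (fun j => p j ω) (fun j => 1 - p j ω) Finset.univ).symm
      _ = 1 := Finset.prod_eq_one fun j _ => by ring
  have hsum_eq : ∑ A ∈ (Finset.univ : Finset (Fin n)).powerset, ∫ ω, MAX ω * G A ω ∂μ
      = ∫ ω, MAX ω ∂μ := by
    rw [← integral_finset_sum _ fun A _ => hMG_int A]
    refine integral_congr_ae (Filter.Eventually.of_forall fun ω => ?_)
    show ∑ A ∈ (Finset.univ : Finset (Fin n)).powerset, MAX ω * G A ω = MAX ω
    rw [← Finset.mul_sum, hGsum1 ω, mul_one]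
  -- put things together
  have hfinal : ∑ A ∈ (Finset.univ : Finset (Fin n)).powerset,
      ((∏ i ∈ A, q i) * ∏ i ∈ Aᶜ, (1 - q i)) *
        (F.filter (fun S => S ⊆ A)).sup'
          ⟨∅, Finset.mem_filter.mpr ⟨hemp, Finset.empty_subset _⟩⟩
          (fun S => ∑ i ∈ S, y i)
      ≤ ∫ ω, MAX ω ∂μ := (Finset.sum_le_sum key).trans (le_of_eq hsum_eq)
  have hcor' := hcor (fun i => (μ {ω | i ∈ S ω}).toReal) hfeas y hy0
  calc ∫ ω, ∑ i ∈ S ω, X i ω ∂μ = ∑ i : Fin n, q i * y i := step1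
    _ ≤ c * ∑ A ∈ (Finset.univ : Finset (Fin n)).powerset,
        ((∏ i ∈ A, q i) * ∏ i ∈ Aᶜ, (1 - q i)) *
          (F.filter (fun S => S ⊆ A)).sup'
            ⟨∅, Finset.mem_filter.mpr ⟨hemp, Finset.empty_subset _⟩⟩
            (fun S => ∑ i ∈ S, y i) := hcor'
    _ ≤ c * ∫ ω, MAX ω ∂μ := mul_le_mul_of_nonneg_left hfinal (by linarith)
end

section
/- Let F be a family of subsets of Fin n that is downward closed (T ⊆ S and S ∈ F imply T ∈ F) and contains the empty set. Consider, in the extended nonnegative reals, the two suprema: CorGap(F) := ⨆ over x ∈ P(F) and y : Fin n → ℝ≥0 of (Σ_i x_i·y_i) / E[ max over S ∈ F with S ⊆ R(x) of Σ_{i∈S} y_i ], and G(F) := ⨆ over all tuples of independent nonnegative integrable random variables X_1,…,X_n (on any probability space, possibly carrying additional independent randomization) and all ex ante feasible selection rules S for F of E[ Σ_{i∈S} X_i ] / E[ max_{T∈F} Σ_{i∈T} X_i ] (with the convention a/0 = ∞ for a > 0 and 0/0 = 0). Then CorGap(F) = G(F). (This is the paper's Lemma stating that the worst-case ratio between the ex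 ante and ex post optima of Bayesian combinatorial selection over F equals the correlation gap of F.) -/
/-- The convex hull of the indicator vectors of the members of `F`. -/
def exAntePolytope (n : ℕ) (F : Finset (Finset (Fin n))) : Set (Fin n → ℝ) :=
  convexHull ℝ {v : Fin n → ℝ | ∃ S ∈ F, v = fun i => if i ∈ S then (1 : ℝ) else 0}

/-- A Bayesian combinatorial selection instance over `Fin n`: a probability space
(possibly carrying additional independent randomization), independent nonnegative
integrable values `X i`, and a measurable selection rule `S`. -/
structure BCSInstance (n : ℕ) where
  Ω : Type
  [mΩ : MeasurableSpace Ω]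
  μ : MeasureTheory.Measure Ω
  prob : MeasureTheory.IsProbabilityMeasure μ
  X : Fin n → Ω → ℝ
  Xmeas : ∀ i, Measurable (X i)
  Xnonneg : ∀ i ω, 0 ≤ X i ω
  Xint : ∀ i, MeasureTheory.Integrable (X i) μ
  Xindep : ProbabilityTheory.iIndepFun X μ
  S : Ω → Finset (Fin n)
  Smeas : ∀ i, MeasurableSet {ω | i ∈ S ω}

open Finset MeasureTheory ProbabilityTheory

lemma exists_hFun {Ω : Type} [MeasurableSpace Ω] (μ : Measure Ω) [IsProbabilityMeasure μ]
    (X : Ω → ℝ) (hXm : Measurable X) (hX0 : ∀ ω, 0 ≤ X ω) (hXi : Integrable X μ)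
    (A : Set Ω) (hA : MeasurableSet A) :
    ∃ h : ℝ → ℝ, Measurable h ∧ (∀ t, 0 ≤ h t) ∧ (∀ t, h t ≤ 1) ∧
      (∫ ω, h (X ω) ∂μ) = (μ A).toReal ∧
      ((μ A).toReal = 0 → h = fun _ => 0) ∧
      (∫ ω, A.indicator X ω ∂μ) ≤ ∫ ω, X ω * h (X ω) ∂μ := by
  set q : ℝ := (μ A).toReal with hqdef
  by_cases hq0 : q = 0
  · refine ⟨fun _ => 0, measurable_const, fun t => le_rfl, fun t => zero_le_one, by simp [hq0], fun _ => rfl, ?_⟩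
    have hA0 : μ A = 0 := by
      have := ENNReal.toReal_eq_zero_iff (μ A)
      rcases this.mp hq0 with h | h
      · exact h
      · exact absurd h (measure_ne_top μ A)
    rw [integral_indicator hA, Measure.restrict_eq_zero.mpr hA0]
    simp
  · have hq : 0 < q := lt_of_le_of_ne ENNReal.toReal_nonneg (Ne.symm hq0)
    have hq1 : q ≤ 1 := by
      have h1 : μ A ≤ 1 := prob_le_one
      have := ENNReal.toReal_mono (by simp) h1
      simpa using this
    set G : ℝ → ℝ := fun t => (μ {ω | t < X ω}).toReal with hGdef
    have hGanti : Antitone G := by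
      intro a b hab
      exact ENNReal.toReal_mono (measure_ne_top _ _)
        (measure_mono (fun ω h => lt_of_le_of_lt hab h))
    set T : Set ℝ := {t | G t < q} with hTdef
    have hTne : T.Nonempty := by
      have hint : (⋂ n : ℕ, {ω | (n : ℝ) < X ω}) = ∅ := by
        ext ω
        simp only [Set.mem_iInter, Set.mem_setOf_eq, Set.mem_empty_iff_false, iff_false, not_forall,
          not_lt]
        obtain ⟨n, hn⟩ := exists_nat_gt (X ω)
        exact ⟨n, hn.le⟩
      have hdir : Directed (· ⊇ ·) (fun n : ℕ => {ω | (n : ℝ) < X ω}) := by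
        refine (Antitone.directed_ge ?_)
        intro a b hab ω hω
        simp only [Set.mem_setOf_eq] at hω ⊢
        have : (a:ℝ) ≤ b := by exact_mod_cast hab
        linarith
      have := Directed.measure_iInter (μ := μ)
        (fun n => ((measurableSet_lt measurable_const hXm)).nullMeasurableSet) hdir
        ⟨0, measure_ne_top _ _⟩
      rw [hint] at this
      have h0 : (⨅ n : ℕ, μ {ω | (n : ℝ) < X ω}) = 0 := by simpa using this.symm
      have : (⨅ n : ℕ, μ {ω | (n : ℝ) < X ω}) < ENNReal.ofReal q := by
        rw [h0]; exact ENNReal.ofReal_pos.mpr hq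
      obtain ⟨n, hn⟩ := iInf_lt_iff.mp this
      exact ⟨n, ENNReal.toReal_lt_of_lt_ofReal hn⟩
    have hTsub : ∀ t ∈ T, (0:ℝ) ≤ t := by
      intro t ht
      by_contra hlt
      push_neg at hlt
      have : {ω | t < X ω} = Set.univ := by
        ext ω; simp only [Set.mem_setOf_eq, Set.mem_univ, iff_true]
        exact lt_of_lt_of_le hlt (hX0 ω)
      have hGt : G t = 1 := by rw [hGdef]; simp [this]
      have : G t < q := ht
      rw [hGt] at this
      linarith
    have hTbdd : BddBelow T := ⟨0, hTsub⟩
    set ts : ℝ := sInf T with htsdef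
    have hts0 : 0 ≤ ts := le_csInf hTne hTsub
    -- upper bound on measure of strict upper set
    have fact3 : μ {ω | ts < X ω} ≤ ENNReal.ofReal q := by
      have hsub : ∀ s : ℝ, ts < s → μ {ω | s ≤ X ω} ≤ ENNReal.ofReal q := by
        intro s hs
        obtain ⟨t', ht'T, ht'lt⟩ := (csInf_lt_iff hTbdd hTne).mp hs
        calc μ {ω | s ≤ X ω} ≤ μ {ω | t' < X ω} :=
              measure_mono (fun ω h => lt_of_lt_of_le ht'lt h)
          _ ≤ ENNReal.ofReal q :=
              le_of_lt ((ENNReal.lt_ofReal_iff_toReal_lt (measure_ne_top _ _)).mpr ht'T)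
      have hunion : {ω | ts < X ω} = ⋃ n : ℕ, {ω | ts + 1/(n+1) ≤ X ω} := by
        ext ω
        simp only [Set.mem_setOf_eq, Set.mem_iUnion]
        constructor
        · intro hlt
          obtain ⟨n, hn⟩ := exists_nat_one_div_lt (sub_pos.mpr hlt)
          exact ⟨n, by push_cast at hn ⊢; linarith⟩
        · rintro ⟨n, hn⟩
          have : (0:ℝ) < 1/(n+1) := by positivity
          linarith
      have hdir : Directed (· ⊆ ·) (fun n : ℕ => {ω | ts + 1/(n+1) ≤ X ω}) := by
        refine Monotone.directed_le ?_
        intro a b hab ω hω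
        simp only [Set.mem_setOf_eq] at hω ⊢
        have : (1:ℝ)/(b+1) ≤ 1/(a+1) := by
          apply one_div_le_one_div_of_le (by positivity)
          exact_mod_cast Nat.add_le_add_right hab 1
        linarith
      rw [hunion, Directed.measure_iUnion hdir]
      refine iSup_le fun n => hsub _ ?_
      have : (0:ℝ) < 1/(n+1) := by positivity
      linarith
    have fact4 : ENNReal.ofReal q ≤ μ {ω | ts ≤ X ω} := by
      have hinter : {ω | ts ≤ X ω} = ⋂ n : ℕ, {ω | ts - 1/(n+1) < X ω} := by
        ext ω
        simp only [Set.mem_setOf_eq, Set.mem_iInter]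
        constructor
        · intro hle n
          have : (0:ℝ) < 1/(n+1) := by positivity
          linarith
        · intro hall
          by_contra hlt
          push_neg at hlt
          obtain ⟨n, hn⟩ := exists_nat_one_div_lt (sub_pos.mpr hlt)
          have := hall n
          push_cast at hn this
          linarith
      have hdir : Directed (· ⊇ ·) (fun n : ℕ => {ω | ts - 1/(n+1) < X ω}) := by
        refine Antitone.directed_ge ?_
        intro a b hab ω hω
        simp only [Set.mem_setOf_eq] at hω ⊢
        have : (1:ℝ)/(b+1) ≤ 1/(a+1) := by
          apply one_div_le_one_div_of_le (by positivity)
          exact_mod_cast Nat.add_le_add_right hab 1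
        linarith
      rw [hinter, Directed.measure_iInter
        (fun n => (measurableSet_lt measurable_const hXm).nullMeasurableSet) hdir
        ⟨0, measure_ne_top _ _⟩]
      refine le_iInf fun n => ?_
      have hnot : (ts - 1/(n+1)) ∉ T := by
        apply notMem_of_lt_csInf _ hTbdd
        have : (0:ℝ) < 1/(n+1) := by positivity
        rw [← htsdef]; linarith
      have : q ≤ G (ts - 1/(n+1)) := not_lt.mp hnot
      exact ENNReal.ofReal_le_of_le_toReal this
    set p : ℝ := (μ {ω | X ω = ts}).toReal with hpdef
    have hp0 : 0 ≤ p := ENNReal.toReal_nonneg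
    have hsplit : (μ {ω | ts ≤ X ω}).toReal = G ts + p := by
      have hset : {ω | ts ≤ X ω} = {ω | ts < X ω} ∪ {ω | X ω = ts} := by
        ext ω
        simp only [Set.mem_setOf_eq, Set.mem_union]
        constructor
        · intro h; rcases lt_or_eq_of_le h with h | h
          · exact Or.inl h
          · exact Or.inr h.symm
        · rintro (h | h)
          · exact h.le
          · exact h.ge
      have hdisj : Disjoint {ω | ts < X ω} {ω | X ω = ts} := by
        rw [Set.disjoint_left]
        intro ω h1 h2
        simp only [Set.mem_setOf_eq] at h1 h2
        rw [h2] at h1; exact lt_irrefl _ h1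
      rw [hset, measure_union hdisj (measurableSet_eq_fun hXm measurable_const),
        ENNReal.toReal_add (measure_ne_top _ _) (measure_ne_top _ _)]
    have hGle : G ts ≤ q := by
      have := ENNReal.toReal_mono ENNReal.ofReal_ne_top fact3
      rwa [ENNReal.toReal_ofReal hq.le] at this
    have hqle : q ≤ G ts + p := by
      rw [← hsplit]
      have := ENNReal.toReal_mono (measure_ne_top _ _) fact4
      rwa [ENNReal.toReal_ofReal hq.le] at this
    set c : ℝ := min 1 (max 0 ((q - G ts) / p)) with hcdef
    have hc0 : 0 ≤ c := le_min zero_le_one (le_max_left _ _)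
    have hc1 : c ≤ 1 := min_le_left _ _
    set h : ℝ → ℝ := fun t => if ts < t then 1 else if t = ts then c else 0 with hhdef
    have hhm : Measurable h := by
      apply Measurable.ite (measurableSet_Ioi (a := ts))
      · exact measurable_const
      · exact Measurable.ite (measurableSet_singleton ts) measurable_const measurable_const
    have hh0 : ∀ t, 0 ≤ h t := by
      intro t; rw [hhdef]; dsimp only
      split_ifs
      · exact zero_le_one
      · exact hc0
      · exact le_rfl
    have hh1 : ∀ t, h t ≤ 1 := by
      intro t; rw [hhdef]; dsimp only
      split_ifs
      · exact le_rfl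
      · exact hc1
      · exact zero_le_one
    -- integral of h(X)
    have hint_eq : (∫ ω, h (X ω) ∂μ) = q := by
      have hpt : ∀ ω, h (X ω) =
          Set.indicator {ω | ts < X ω} (fun _ => (1:ℝ)) ω +
          Set.indicator {ω | X ω = ts} (fun _ => c) ω := by
        intro ω
        rw [hhdef]
        by_cases h1 : ts < X ω
        · have h2 : ¬ X ω = ts := by intro h; rw [h] at h1; exact lt_irrefl _ h1
          simp [Set.indicator_apply, h1, h2]
        · by_cases h2 : X ω = ts
          · simp [Set.indicator_apply, h1, h2]
          · simp [Set.indicator_apply, h1, h2]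
      rw [integral_congr_ae (Filter.Eventually.of_forall hpt)]
      rw [integral_add]
      · rw [integral_indicator_const _ (measurableSet_lt measurable_const hXm),
          integral_indicator_const _ (measurableSet_eq_fun hXm measurable_const)]
        simp only [smul_eq_mul, mul_one]
        have key : G ts + p * c = q := by
          rcases eq_or_lt_of_le hp0 with hp | hp
          · have hGq : G ts = q := le_antisymm hGle (by linarith)
            rw [← hp, hGq]; ring
          · have hdle : (q - G ts) / p ≤ 1 := (div_le_one hp).mpr (by linarith)
            have hdge : 0 ≤ (q - G ts) / p := div_nonneg (by linarith) hp.le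
            have hcval : c = (q - G ts) / p := by
              rw [hcdef, max_eq_right hdge, min_eq_right hdle]
            rw [hcval]
            field_simp; ring
        calc (μ {ω | ts < X ω}).toReal + (μ {ω | X ω = ts}).toReal * c
            = G ts + p * c := by rw [hGdef, hpdef]
          _ = q := key
      · exact (integrable_const (1:ℝ)).indicator (measurableSet_lt measurable_const hXm)
      · exact (integrable_const c).indicator (measurableSet_eq_fun hXm measurable_const)
    -- integrability facts
    have hintHX : Integrable (fun ω => h (X ω)) μ := by
      refine Integrable.mono' (integrable_const (1:ℝ))
        ((hhm.comp hXm).aestronglyMeasurable) ?_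
      refine Filter.Eventually.of_forall fun ω => ?_
      rw [Real.norm_eq_abs, abs_of_nonneg (hh0 _)]
      exact hh1 _
    have hintXh : Integrable (fun ω => X ω * h (X ω)) μ := by
      have hb : ∀ᵐ ω ∂μ, ‖h (X ω)‖ ≤ 1 := by
        refine Filter.Eventually.of_forall fun ω => ?_
        rw [Real.norm_eq_abs, abs_of_nonneg (hh0 _)]
        exact hh1 _
      have := Integrable.bdd_mul (c := 1) hXi
        ((hhm.comp hXm).aestronglyMeasurable) hb
      exact this.congr (Filter.Eventually.of_forall fun ω => by simp [Function.comp, mul_comm])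
    have hintInd : Integrable (fun ω => A.indicator X ω) μ := hXi.indicator hA
    have hindc : Integrable (fun ω => A.indicator (fun _ => (1:ℝ)) ω) μ :=
      (integrable_const (1:ℝ)).indicator hA
    -- bathtub pointwise bound
    have hpt : ∀ ω, A.indicator X ω ≤
        X ω * h (X ω) + ts * (A.indicator (fun _ => (1:ℝ)) ω - h (X ω)) := by
      intro ω
      have hXc : A.indicator X ω = X ω * A.indicator (fun _ => (1:ℝ)) ω := by
        by_cases hω : ω ∈ A <;> simp [Set.indicator_apply, hω]
      rw [hXc]
      set c' := A.indicator (fun _ => (1:ℝ)) ω with hc'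
      have hc'0 : 0 ≤ c' := by by_cases hω : ω ∈ A <;> simp [hc', Set.indicator_apply, hω]
      have hc'1 : c' ≤ 1 := by by_cases hω : ω ∈ A <;> simp [hc', Set.indicator_apply, hω]
      have key : (X ω - ts) * (c' - h (X ω)) ≤ 0 := by
        rcases lt_trichotomy ts (X ω) with h1 | h1 | h1
        · have hh : h (X ω) = 1 := by rw [hhdef]; simp [h1]
          rw [hh]
          apply mul_nonpos_of_nonneg_of_nonpos (by linarith) (by linarith)
        · rw [← h1]; ring_nf; simp
        · have hne : ¬ ts < X ω := not_lt.mpr h1.le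
          have hne2 : ¬ X ω = ts := ne_of_lt h1
          have hh : h (X ω) = 0 := by rw [hhdef]; simp [hne, hne2]
          rw [hh]
          apply mul_nonpos_of_nonpos_of_nonneg (by linarith) (by linarith)
      nlinarith [key]
    -- integrate
    have hbound : (∫ ω, A.indicator X ω ∂μ) ≤
        ∫ ω, (X ω * h (X ω) + ts * (A.indicator (fun _ => (1:ℝ)) ω - h (X ω))) ∂μ := by
      refine integral_mono hintInd ?_ hpt
      refine hintXh.add ?_
      have := (hindc.sub hintHX).const_mul ts
      exact this.congr (Filter.Eventually.of_forall fun ω => by simp)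
    have hconst : (∫ ω, A.indicator (fun _ => (1:ℝ)) ω ∂μ) = q := by
      rw [integral_indicator_const _ hA]; simp [hqdef, Measure.real]
    refine ⟨h, hhm, hh0, hh1, hint_eq, fun hcon => absurd hcon hq0, ?_⟩
    calc (∫ ω, A.indicator X ω ∂μ)
        ≤ ∫ ω, (X ω * h (X ω) + ts * (A.indicator (fun _ => (1:ℝ)) ω - h (X ω))) ∂μ := hbound
      _ = (∫ ω, X ω * h (X ω) ∂μ) + ts * ((∫ ω, A.indicator (fun _ => (1:ℝ)) ω ∂μ) -
            ∫ ω, h (X ω) ∂μ) := by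
          have h2 : Integrable (fun ω => ts * (A.indicator (fun _ => (1:ℝ)) ω - h (X ω))) μ := by
            have := (hindc.sub hintHX).const_mul ts
            exact this.congr (Filter.Eventually.of_forall fun ω => by simp)
          rw [integral_add hintXh h2, integral_const_mul ts, integral_sub hindc hintHX]
      _ = ∫ ω, X ω * h (X ω) ∂μ := by rw [hconst, hint_eq]; ring

lemma integral_prod_comp {n : ℕ} {Ω : Type} [MeasurableSpace Ω] {μ : Measure Ω}
    [IsProbabilityMeasure μ] {X : Fin n → Ω → ℝ}
    (hX : iIndepFun X μ) (hXm : ∀ i, Measurable (X i))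
    (φ : Fin n → ℝ → ℝ) (hφ : ∀ i, Measurable (φ i)) (s : Finset (Fin n)) :
    ∫ ω, ∏ j ∈ s, φ j (X j ω) ∂μ = ∏ j ∈ s, ∫ ω, φ j (X j ω) ∂μ := by
  classical
  have hg : iIndepFun (fun i => φ i ∘ X i) μ := hX.comp φ hφ
  have hgm : ∀ i, Measurable (φ i ∘ X i) := fun i => (hφ i).comp (hXm i)
  induction s using Finset.induction_on with
  | empty => simp
  | @insert i s hi ih =>
    have hindep : IndepFun (∏ j ∈ s, (φ j ∘ X j)) (φ i ∘ X i) μ :=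
      hg.indepFun_finset_prod_of_notMem hgm hi
    have hprodm : Measurable (∏ j ∈ s, (φ j ∘ X j)) := by
      have heq : (∏ j ∈ s, (φ j ∘ X j)) = fun a => ∏ j ∈ s, φ j (X j a) := by
        ext a; simp [Finset.prod_apply, Function.comp]
      rw [heq]
      exact Finset.measurable_prod s (fun j _ => (hφ j).comp (hXm j))
    have hmul := hindep.symm.integral_mul_eq_mul_integral ((hgm i).aestronglyMeasurable)
      hprodm.aestronglyMeasurable
    calc ∫ ω, ∏ j ∈ insert i s, φ j (X j ω) ∂μ
        = ∫ ω, ((φ i ∘ X i) * ∏ j ∈ s, (φ j ∘ X j)) ω ∂μ := by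
          congr 1; ext ω
          simp [Finset.prod_insert hi, Finset.prod_apply, Function.comp]
      _ = (∫ ω, (φ i ∘ X i) ω ∂μ) * ∫ ω, (∏ j ∈ s, (φ j ∘ X j)) ω ∂μ := hmul
      _ = (∫ ω, φ i (X i ω) ∂μ) * ∫ ω, ∏ j ∈ s, φ j (X j ω) ∂μ := by
          congr 1
          congr 1; ext ω; simp [Finset.prod_apply, Function.comp]
      _ = ∏ j ∈ insert i s, ∫ ω, φ j (X j ω) ∂μ := by
          rw [ih, Finset.prod_insert hi]

lemma iIndepFun_pi {n : ℕ} {β : Fin n → Type*} [∀ i, MeasurableSpace (β i)]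
    (ν : ∀ i, Measure (β i)) [∀ i, IsProbabilityMeasure (ν i)] :
    iIndepFun (fun i (ω : ∀ j, β j) => ω i) (Measure.pi ν) := by
  classical
  rw [iIndepFun_iff_measure_inter_preimage_eq_mul]
  intro s sets hsets
  have key : ∀ (s' : Finset (Fin n)) (t : ∀ i, Set (β i)),
      Measure.pi ν (⋂ i ∈ s', (fun (ω : ∀ j, β j) => ω i) ⁻¹' t i)
      = ∏ i ∈ s', ν i (t i) := by
    intro s' t
    have h1 : (⋂ i ∈ s', (fun (ω : ∀ j, β j) => ω i) ⁻¹' t i)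
        = Set.pi Set.univ (fun i => if i ∈ s' then t i else Set.univ) := by
      ext ω
      simp only [Set.mem_iInter, Set.mem_preimage, Set.mem_pi, Set.mem_univ, true_implies]
      constructor
      · intro h i
        by_cases hi : i ∈ s' <;> simp [hi, h i]
      · intro h i hi
        have := h i; simpa [hi] using this
    rw [h1, Measure.pi_pi]
    have : ∀ j, ν j (if j ∈ s' then t j else Set.univ)
        = if j ∈ s' then ν j (t j) else 1 := by
      intro j; split_ifs <;> simp
    simp_rw [this]
    rw [Finset.prod_ite_mem Finset.univ s' (fun j => ν j (t j)), Finset.univ_inter]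
  rw [key s sets]
  refine Finset.prod_congr rfl fun i hi => ?_
  have h2 : (fun (ω : ∀ j, β j) => ω i) ⁻¹' sets i
      = ⋂ j ∈ ({i} : Finset (Fin n)), (fun (ω : ∀ j, β j) => ω j) ⁻¹' sets j := by
    simp
  rw [h2, key {i} sets, Finset.prod_singleton]

lemma polytope_mem_box {n : ℕ} {F : Finset (Finset (Fin n))} {x : Fin n → ℝ}
    (hx : x ∈ exAntePolytope n F) : ∀ i, 0 ≤ x i ∧ x i ≤ 1 := by
  have hsub : exAntePolytope n F ⊆ Set.pi Set.univ (fun _ => Set.Icc (0:ℝ) 1) := by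
    apply convexHull_min
    · rintro v ⟨S, _, rfl⟩ i _
      by_cases hi : i ∈ S <;> simp [hi]
    · exact convex_pi (fun i _ => convex_Icc 0 1)
  have := hsub hx
  intro i
  exact (this i (Set.mem_univ i))

lemma prod_split {n : ℕ} (A : Finset (Fin n)) (a b : Fin n → ℝ) :
    ∏ i : Fin n, (if i ∈ A then a i else b i) = (∏ i ∈ A, a i) * ∏ i ∈ Aᶜ, b i := by
  classical
  rw [Finset.prod_ite]
  congr 1
  · congr 1; ext i; simp
  · congr 1; ext i; simp

lemma sup'_restrict {n : ℕ} {F : Finset (Finset (Fin n))}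
    (hdc : ∀ S ∈ F, ∀ T ⊆ S, T ∈ F) (hemp : ∅ ∈ F) (y : Fin n → ℝ)
    (A : Finset (Fin n)) :
    F.sup' ⟨∅, hemp⟩ (fun T => ∑ i ∈ T, (if i ∈ A then y i else 0))
      = (F.filter (fun S => S ⊆ A)).sup'
        ⟨∅, Finset.mem_filter.mpr ⟨hemp, Finset.empty_subset _⟩⟩ (fun T => ∑ i ∈ T, y i) := by
  classical
  apply le_antisymm
  · refine Finset.sup'_le _ _ fun T hT => ?_
    have h1 : ∑ i ∈ T, (if i ∈ A then y i else 0) = ∑ i ∈ T ∩ A, y i := by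
      rw [Finset.sum_ite_mem]
    rw [h1]
    refine Finset.le_sup' (f := fun T => ∑ i ∈ T, y i) ?_
    exact Finset.mem_filter.mpr ⟨hdc T hT _ (Finset.inter_subset_left), Finset.inter_subset_right⟩
  · refine Finset.sup'_le _ _ fun T hT => ?_
    obtain ⟨hTF, hTA⟩ := Finset.mem_filter.mp hT
    have h1 : ∑ i ∈ T, y i = ∑ i ∈ T, (if i ∈ A then y i else 0) := by
      refine Finset.sum_congr rfl fun i hi => ?_
      simp [hTA hi]
    rw [h1]
    exact Finset.le_sup' (f := fun T => ∑ i ∈ T, (if i ∈ A then y i else 0)) hTF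

lemma easy_construct (n : ℕ) (F : Finset (Finset (Fin n)))
    (hdc : ∀ S ∈ F, ∀ T ⊆ S, T ∈ F) (hemp : ∅ ∈ F)
    (x : Fin n → ℝ) (hx : x ∈ exAntePolytope n F) (y : Fin n → ℝ) (hy : ∀ i, 0 ≤ y i) :
    ∃ I : BCSInstance n,
      ((fun i => (I.μ {ω | i ∈ I.S ω}).toReal) ∈ exAntePolytope n F) ∧
      (∫ ω, ∑ i ∈ I.S ω, I.X i ω ∂I.μ) = ∑ i : Fin n, x i * y i ∧
      (∫ ω, F.sup' ⟨∅, hemp⟩ (fun T => ∑ i ∈ T, I.X i ω) ∂I.μ) =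
        ∑ A ∈ (Finset.univ : Finset (Fin n)).powerset,
          ((∏ i ∈ A, x i) * ∏ i ∈ Aᶜ, (1 - x i)) *
            (F.filter (fun S => S ⊆ A)).sup'
              ⟨∅, Finset.mem_filter.mpr ⟨hemp, Finset.empty_subset _⟩⟩
              (fun S => ∑ i ∈ S, y i) := by
  classical
  have hx01 := polytope_mem_box hx
  set Ω : Type := Fin n → Bool with hΩ
  haveI : MeasurableSingletonClass Ω := by infer_instance
  haveI hdisc : DiscreteMeasurableSpace Ω := ⟨fun s => s.toFinite.measurableSet⟩
  set bern : (i : Fin n) → Measure Bool := fun i =>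
    (PMF.bernoulli (x i).toNNReal (Real.toNNReal_le_one.mpr (hx01 i).2)).toMeasure
    with hberndef
  haveI : ∀ i, IsProbabilityMeasure (bern i) := fun i => PMF.toMeasure.isProbabilityMeasure _
  set μ : Measure Ω := Measure.pi bern with hμdef
  haveI : IsProbabilityMeasure μ := by rw [hμdef]; infer_instance
  set φ : Fin n → Bool → ℝ := fun i b => if b then y i else 0 with hφdef
  set X : Fin n → Ω → ℝ := fun i => φ i ∘ (fun ω => ω i) with hXdef
  set Sel : Ω → Finset (Fin n) := fun ω => Finset.univ.filter (fun i => ω i = true) with hSdef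
  -- basic measure computations
  have hbern_sing : ∀ i (b : Bool), bern i {b}
      = (if b then ENNReal.ofReal (x i) else 1 - ENNReal.ofReal (x i)) := by
    intro i b
    rw [hberndef]
    rw [PMF.toMeasure_apply_singleton _ _ (measurableSet_singleton b)]
    cases b <;> simp [PMF.bernoulli_apply, ENNReal.ofReal]
  have hbern_toReal : ∀ i (b : Bool), (bern i {b}).toReal
      = (if b then x i else 1 - x i) := by
    intro i b
    rw [hbern_sing]
    cases b
    · simp only [Bool.false_eq_true, if_false]
      rw [← ENNReal.ofReal_one, ← ENNReal.ofReal_sub _ (hx01 i).1,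
        ENNReal.toReal_ofReal (by linarith [(hx01 i).2])]
    · simp only [if_true]
      exact ENNReal.toReal_ofReal (hx01 i).1
  have hmarg : ∀ i, μ {ω : Ω | i ∈ Sel ω} = ENNReal.ofReal (x i) := by
    intro i
    have hset : {ω : Ω | i ∈ Sel ω} = (fun ω : Ω => ω i) ⁻¹' {true} := by
      ext ω; simp [hSdef]
    rw [hset, hμdef, Set.eval_preimage, Measure.pi_pi]
    rw [Finset.prod_eq_single i]
    · simp [Function.update_self, hbern_sing]
    · intro j _ hj; rw [Function.update_of_ne hj]; exact measure_univ
    · intro h; exact absurd (Finset.mem_univ i) h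
  have hsing : ∀ ω₀ : Ω, (μ {ω₀}).toReal
      = ∏ i : Fin n, (if i ∈ Sel ω₀ then x i else 1 - x i) := by
    intro ω₀
    rw [hμdef, ← Set.univ_pi_singleton ω₀, Measure.pi_pi, ENNReal.toReal_prod]
    refine Finset.prod_congr rfl fun i _ => ?_
    rw [hbern_toReal]
    have : (i ∈ Sel ω₀) = (ω₀ i = true) := by simp [hSdef]
    by_cases hb : ω₀ i = true <;> simp [hb, hSdef]
  -- instance fields
  have hXmeas : ∀ i, Measurable (X i) := fun i => Measurable.of_discrete
  have hXnn : ∀ i ω, 0 ≤ X i ω := by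
    intro i ω
    by_cases hb : ω i = true <;> simp [hXdef, hφdef, Function.comp, hb, hy i]
  have hXint : ∀ i, Integrable (X i) μ := fun i => Integrable.of_finite
  have hXindep : iIndepFun X μ := by
    rw [hXdef, hμdef]
    exact (iIndepFun_pi bern).comp φ (fun i => Measurable.of_discrete)
  have hSmeas : ∀ i, MeasurableSet {ω : Ω | i ∈ Sel ω} := fun i => MeasurableSet.of_discrete
  set I : BCSInstance n := ⟨Ω, μ, inferInstance, X, hXmeas, hXnn, hXint, hXindep, Sel, hSmeas⟩
    with hIdef
  refine ⟨I, ?_, ?_, ?_⟩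
  · have : (fun i => (μ {ω : Ω | i ∈ Sel ω}).toReal) = x := by
      funext i
      rw [hmarg i, ENNReal.toReal_ofReal (hx01 i).1]
    show (fun i => (μ {ω : Ω | i ∈ Sel ω}).toReal) ∈ exAntePolytope n F
    rw [this]; exact hx
  · -- numerator
    show (∫ ω, ∑ i ∈ Sel ω, X i ω ∂μ) = ∑ i : Fin n, x i * y i
    have hpt : ∀ ω, ∑ i ∈ Sel ω, X i ω
        = ∑ i : Fin n, Set.indicator {ω : Ω | i ∈ Sel ω} (fun _ => y i) ω := by
      intro ω
      have h1 : ∑ i ∈ Sel ω, X i ω = ∑ i ∈ Sel ω, y i := by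
        refine Finset.sum_congr rfl fun i hi => ?_
        have : ω i = true := (Finset.mem_filter.mp hi).2
        simp [hXdef, hφdef, Function.comp, this]
      rw [h1]
      rw [Finset.sum_indicator_eq_sum_filter]
      congr 1
      ext i
      simp [hSdef]
    rw [integral_congr_ae (Filter.Eventually.of_forall hpt), integral_finset_sum]
    · refine Finset.sum_congr rfl fun i _ => ?_
      rw [integral_indicator_const _ (hSmeas i), Measure.real, hmarg i,
        ENNReal.toReal_ofReal (hx01 i).1, smul_eq_mul]
    · exact fun i _ => Integrable.of_finite
  · -- denominator
    show (∫ ω, F.sup' ⟨∅, hemp⟩ (fun T => ∑ i ∈ T, X i ω) ∂μ) = _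
    have hpt : ∀ ω, F.sup' ⟨∅, hemp⟩ (fun T => ∑ i ∈ T, X i ω)
        = (F.filter (fun S => S ⊆ Sel ω)).sup'
          ⟨∅, Finset.mem_filter.mpr ⟨hemp, Finset.empty_subset _⟩⟩ (fun T => ∑ i ∈ T, y i) := by
      intro ω
      rw [← sup'_restrict hdc hemp y (Sel ω)]
      congr 1
      funext T
      refine Finset.sum_congr rfl fun i _ => ?_
      have : (i ∈ Sel ω) = (ω i = true) := by simp [hSdef]
      simp only [hXdef, hφdef, Function.comp, this]
    rw [integral_congr_ae (Filter.Eventually.of_forall hpt)]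
    rw [integral_fintype Integrable.of_finite]
    refine Finset.sum_nbij' (fun ω₀ => Sel ω₀) (fun A => (fun i => decide (i ∈ A) : Ω)) ?_ ?_ ?_ ?_ ?_
    · intro ω₀ _; exact Finset.mem_powerset.mpr (Finset.subset_univ _)
    · intro A _; exact Finset.mem_univ _
    · intro ω₀ _
      funext i
      simp [hSdef]
    · intro A _
      ext i
      simp [hSdef]
    · intro ω₀ _
      rw [Measure.real, hsing ω₀, smul_eq_mul, prod_split]

lemma hard_bound (n : ℕ) (F : Finset (Finset (Fin n)))
    (hdc : ∀ S ∈ F, ∀ T ⊆ S, T ∈ F) (hemp : ∅ ∈ F) (I : BCSInstance n)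
    (hq : (fun i => (I.μ {ω | i ∈ I.S ω}).toReal) ∈ exAntePolytope n F) :
    ∃ y : Fin n → ℝ, (∀ i, 0 ≤ y i) ∧
      (∫ ω, ∑ i ∈ I.S ω, I.X i ω ∂I.μ) ≤
        (∑ i : Fin n, (I.μ {ω | i ∈ I.S ω}).toReal * y i) ∧
      (∑ A ∈ (Finset.univ : Finset (Fin n)).powerset,
          ((∏ i ∈ A, (I.μ {ω | i ∈ I.S ω}).toReal) *
            ∏ i ∈ Aᶜ, (1 - (I.μ {ω | i ∈ I.S ω}).toReal)) *
            (F.filter (fun S => S ⊆ A)).sup'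
              ⟨∅, Finset.mem_filter.mpr ⟨hemp, Finset.empty_subset _⟩⟩
              (fun S => ∑ i ∈ S, y i)) ≤
        ∫ ω, F.sup' ⟨∅, hemp⟩ (fun T => ∑ i ∈ T, I.X i ω) ∂I.μ := by
  classical
  obtain ⟨Ω, μ, prob, X, Xmeas, Xnonneg, Xint, Xindep, S, Smeas⟩ := I
  haveI := prob
  dsimp only at hq ⊢
  set q : Fin n → ℝ := fun i => (μ {ω | i ∈ S ω}).toReal with hqdef
  have hq01 : ∀ i, 0 ≤ q i ∧ q i ≤ 1 := polytope_mem_box hq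
  choose h hm h0 h1 hintq hzero hbath using fun i =>
    exists_hFun μ (X i) (Xmeas i) (Xnonneg i) (Xint i) {ω | i ∈ S ω} (Smeas i)
  have hintable : ∀ i, Integrable (fun ω => h i (X i ω)) μ := by
    intro i
    refine Integrable.mono' (integrable_const (1:ℝ))
      (((hm i).comp (Xmeas i)).aestronglyMeasurable) ?_
    refine Filter.Eventually.of_forall fun ω => ?_
    rw [Real.norm_eq_abs, abs_of_nonneg (h0 i _)]
    exact h1 i _
  set y : Fin n → ℝ := fun i =>
    if q i = 0 then 0 else (∫ ω, X i ω * h i (X i ω) ∂μ) / q i with hydef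
  have hyq : ∀ i, q i * y i = ∫ ω, X i ω * h i (X i ω) ∂μ := by
    intro i
    rw [hydef]
    dsimp only
    split_ifs with hq0
    · rw [hq0, zero_mul]
      rw [hzero i hq0]
      simp
    · field_simp
  have hy0 : ∀ i, 0 ≤ y i := by
    intro i
    rw [hydef]; dsimp only
    split_ifs with hq0
    · exact le_rfl
    · refine div_nonneg (integral_nonneg fun ω => mul_nonneg (Xnonneg i ω) (h0 i _)) (hq01 i).1
  refine ⟨y, hy0, ?_, ?_⟩
  · -- numerator bound
    have hpt : ∀ ω, ∑ i ∈ S ω, X i ω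
        = ∑ i : Fin n, Set.indicator {ω | i ∈ S ω} (X i) ω := by
      intro ω
      calc ∑ i ∈ S ω, X i ω = ∑ i ∈ Finset.univ ∩ S ω, X i ω := by rw [Finset.univ_inter]
        _ = ∑ i : Fin n, (if i ∈ S ω then X i ω else 0) :=
            (Finset.sum_ite_mem Finset.univ (S ω) (fun i => X i ω)).symm
        _ = ∑ i : Fin n, Set.indicator {ω | i ∈ S ω} (X i) ω := by
            refine Finset.sum_congr rfl fun i _ => ?_
            rw [Set.indicator_apply]
            rfl
    rw [integral_congr_ae (Filter.Eventually.of_forall hpt),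
      integral_finset_sum _ (fun i _ => (Xint i).indicator (Smeas i))]
    refine Finset.sum_le_sum fun i _ => ?_
    rw [hyq i]
    exact hbath i
  · -- denominator bound
    have hne2 : ∀ A : Finset (Fin n), (F.filter (fun S => S ⊆ A)).Nonempty := fun A =>
      ⟨∅, Finset.mem_filter.mpr ⟨hemp, Finset.empty_subset _⟩⟩
    have hchoose : ∀ A : Finset (Fin n), ∃ T, T ∈ F.filter (fun S => S ⊆ A) ∧
        (F.filter (fun S => S ⊆ A)).sup'
          ⟨∅, Finset.mem_filter.mpr ⟨hemp, Finset.empty_subset _⟩⟩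
          (fun T => ∑ i ∈ T, y i) = ∑ i ∈ T, y i :=
      fun A => Finset.exists_mem_eq_sup' _ _
    choose Tst hTmem hTeq using hchoose
    have hTF : ∀ A, Tst A ∈ F := fun A => (Finset.mem_filter.mp (hTmem A)).1
    have hTsub : ∀ A, Tst A ⊆ A := fun A => (Finset.mem_filter.mp (hTmem A)).2
    set H : Fin n → Finset (Fin n) → ℝ → ℝ :=
      fun j A t => if j ∈ A then h j t else 1 - h j t with hHdef
    have hHm : ∀ j A, Measurable (H j A) := by
      intro j A; rw [hHdef]; dsimp only
      split_ifs
      · exact hm j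
      · exact measurable_const.sub (hm j)
    have hH0 : ∀ j A t, 0 ≤ H j A t := by
      intro j A t; rw [hHdef]; dsimp only; split_ifs
      · exact h0 j t
      · linarith [h1 j t]
    have hH1 : ∀ j A t, H j A t ≤ 1 := by
      intro j A t; rw [hHdef]; dsimp only; split_ifs
      · exact h1 j t
      · linarith [h0 j t]
    have hHint : ∀ j A, (∫ ω, H j A (X j ω) ∂μ) = (if j ∈ A then q j else 1 - q j) := by
      intro j A; rw [hHdef]; dsimp only
      split_ifs
      · exact hintq j
      · rw [integral_sub (integrable_const 1) (hintable j), hintq j, integral_const]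
        simp [hqdef]
    have hWm : ∀ A, Measurable (fun ω => ∏ j : Fin n, H j A (X j ω)) :=
      fun A => Finset.measurable_prod _ (fun j _ => (hHm j A).comp (Xmeas j))
    have hWbd : ∀ A ω, ‖∏ j : Fin n, H j A (X j ω)‖ ≤ 1 := by
      intro A ω
      rw [Real.norm_eq_abs, abs_of_nonneg (Finset.prod_nonneg fun j _ => hH0 j A _)]
      exact Finset.prod_le_one (fun j _ => hH0 j A _) (fun j _ => hH1 j A _)
    have hterm_int : ∀ (A : Finset (Fin n)) (g : Ω → ℝ), Integrable g μ →
        Integrable (fun ω => (∏ j : Fin n, H j A (X j ω)) * g ω) μ := by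
      intro A g hg
      exact Integrable.bdd_mul (c := 1) hg (hWm A).aestronglyMeasurable
        (Filter.Eventually.of_forall (hWbd A))
    have hsumint : ∀ A : Finset (Fin n), Integrable (fun ω => ∑ i ∈ Tst A, X i ω) μ :=
      fun A => integrable_finset_sum _ (fun i _ => Xint i)
    have hMm : Measurable (fun ω => F.sup' ⟨∅, hemp⟩ (fun T => ∑ i ∈ T, X i ω)) := by
      have heq : (fun ω => F.sup' ⟨∅, hemp⟩ (fun T => ∑ i ∈ T, X i ω))
          = F.sup' ⟨∅, hemp⟩ (fun T ω => ∑ i ∈ T, X i ω) := by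
        funext ω; exact (Finset.sup'_apply (C := fun _ : Ω => ℝ) _ (fun T ω => ∑ i ∈ T, X i ω) ω).symm
      rw [heq]
      exact Finset.measurable_sup' _ (fun T _ => Finset.measurable_sum _ (fun i _ => Xmeas i))
    have hM0 : ∀ ω, 0 ≤ F.sup' ⟨∅, hemp⟩ (fun T => ∑ i ∈ T, X i ω) := by
      intro ω
      have := Finset.le_sup' (f := fun T => ∑ i ∈ T, X i ω) hemp
      simpa using this
    have hMint : Integrable (fun ω => F.sup' ⟨∅, hemp⟩ (fun T => ∑ i ∈ T, X i ω)) μ := by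
      refine Integrable.mono'
        (integrable_finset_sum (μ := μ) Finset.univ (fun (i : Fin n) _ => Xint i) :
          Integrable (fun ω => ∑ i : Fin n, X i ω) μ)
        hMm.aestronglyMeasurable ?_
      refine Filter.Eventually.of_forall fun ω => ?_
      rw [Real.norm_eq_abs, abs_of_nonneg (hM0 ω)]
      refine Finset.sup'_le _ _ fun T _ => ?_
      exact Finset.sum_le_sum_of_subset_of_nonneg (Finset.subset_univ T)
        (fun i _ _ => Xnonneg i ω)
    -- pointwise bound
    have hptw : ∀ ω, (∑ A ∈ (Finset.univ : Finset (Fin n)).powerset,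
        (∏ j : Fin n, H j A (X j ω)) * ∑ i ∈ Tst A, X i ω)
        ≤ F.sup' ⟨∅, hemp⟩ (fun T => ∑ i ∈ T, X i ω) := by
      intro ω
      have hsum1 : (∑ A ∈ (Finset.univ : Finset (Fin n)).powerset,
          ∏ j : Fin n, H j A (X j ω)) = 1 := by
        calc ∑ A ∈ (Finset.univ : Finset (Fin n)).powerset, ∏ j : Fin n, H j A (X j ω)
            = ∑ A ∈ (Finset.univ : Finset (Fin n)).powerset,
              (∏ j ∈ A, h j (X j ω)) * ∏ j ∈ Aᶜ, (1 - h j (X j ω)) := by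
              refine Finset.sum_congr rfl fun A _ => ?_
              rw [← prod_split A (fun j => h j (X j ω)) (fun j => 1 - h j (X j ω))]
          _ = ∏ j : Fin n, (h j (X j ω) + (1 - h j (X j ω))) := by
              rw [Finset.prod_add]
              refine Finset.sum_congr rfl fun A _ => ?_
              rw [Finset.compl_eq_univ_sdiff]
          _ = 1 := by simp
      calc (∑ A ∈ (Finset.univ : Finset (Fin n)).powerset,
          (∏ j : Fin n, H j A (X j ω)) * ∑ i ∈ Tst A, X i ω)
          ≤ ∑ A ∈ (Finset.univ : Finset (Fin n)).powerset,
            (∏ j : Fin n, H j A (X j ω)) *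
              F.sup' ⟨∅, hemp⟩ (fun T => ∑ i ∈ T, X i ω) := by
            refine Finset.sum_le_sum fun A _ => ?_
            refine mul_le_mul_of_nonneg_left ?_ (Finset.prod_nonneg fun j _ => hH0 j A _)
            exact Finset.le_sup' (f := fun T => ∑ i ∈ T, X i ω) (hTF A)
        _ = F.sup' ⟨∅, hemp⟩ (fun T => ∑ i ∈ T, X i ω) := by
            rw [← Finset.sum_mul, hsum1, one_mul]
    -- per-A evaluation
    have hAeval : ∀ A ∈ (Finset.univ : Finset (Fin n)).powerset,
        (∫ ω, (∏ j : Fin n, H j A (X j ω)) * ∑ i ∈ Tst A, X i ω ∂μ)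
        = ((∏ i ∈ A, q i) * ∏ i ∈ Aᶜ, (1 - q i)) *
            (F.filter (fun S => S ⊆ A)).sup'
              ⟨∅, Finset.mem_filter.mpr ⟨hemp, Finset.empty_subset _⟩⟩
              (fun S => ∑ i ∈ S, y i) := by
      intro A _
      have hiA : ∀ i ∈ Tst A, i ∈ A := fun i hi => hTsub A hi
      have step1 : (∫ ω, (∏ j : Fin n, H j A (X j ω)) * ∑ i ∈ Tst A, X i ω ∂μ)
          = ∑ i ∈ Tst A, ∫ ω, (∏ j : Fin n, H j A (X j ω)) * X i ω ∂μ := by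
        have heq : ∀ ω, (∏ j : Fin n, H j A (X j ω)) * ∑ i ∈ Tst A, X i ω
            = ∑ i ∈ Tst A, (∏ j : Fin n, H j A (X j ω)) * X i ω := by
          intro ω; rw [Finset.mul_sum]
        rw [integral_congr_ae (Filter.Eventually.of_forall heq),
          integral_finset_sum _ (fun i _ => hterm_int A (X i) (Xint i))]
      rw [step1]
      have step2 : ∀ i ∈ Tst A, (∫ ω, (∏ j : Fin n, H j A (X j ω)) * X i ω ∂μ)
          = y i * ∏ j : Fin n, (if j ∈ A then q j else 1 - q j) := by
        intro i hi
        have hiA' : i ∈ A := hiA i hi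
        set φ : Fin n → ℝ → ℝ := fun j t => if j = i then t * h j t else H j A t with hφdef
        have hφm : ∀ j, Measurable (φ j) := by
          intro j; rw [hφdef]; dsimp only
          split_ifs
          · exact measurable_id.mul (hm j)
          · exact hHm j A
        have e1 : ∀ ω, (∏ j : Fin n, H j A (X j ω)) * X i ω = ∏ j : Fin n, φ j (X j ω) := by
          intro ω
          rw [← Finset.mul_prod_erase Finset.univ (fun j => H j A (X j ω)) (Finset.mem_univ i),
            ← Finset.mul_prod_erase Finset.univ (fun j => φ j (X j ω)) (Finset.mem_univ i)]
          have h2 : (∏ j ∈ Finset.univ.erase i, φ j (X j ω))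
              = ∏ j ∈ Finset.univ.erase i, H j A (X j ω) := by
            refine Finset.prod_congr rfl fun j hj => ?_
            have hji : j ≠ i := (Finset.mem_erase.mp hj).1
            rw [hφdef]; dsimp only; rw [if_neg hji]
          have h3 : φ i (X i ω) = X i ω * h i (X i ω) := by
            rw [hφdef]; dsimp only; rw [if_pos rfl]
          have h4 : H i A (X i ω) = h i (X i ω) := by
            rw [hHdef]; dsimp only; rw [if_pos hiA']
          rw [h2, h3, h4]; ring
        rw [integral_congr_ae (Filter.Eventually.of_forall e1)]
        rw [integral_prod_comp Xindep Xmeas φ hφm]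
        rw [← Finset.mul_prod_erase Finset.univ
          (fun j => (if j ∈ A then q j else 1 - q j)) (Finset.mem_univ i)]
        rw [← Finset.mul_prod_erase Finset.univ (fun j => ∫ ω, φ j (X j ω) ∂μ)
          (Finset.mem_univ i)]
        have h5 : (∏ j ∈ Finset.univ.erase i, ∫ ω, φ j (X j ω) ∂μ)
            = ∏ j ∈ Finset.univ.erase i, (if j ∈ A then q j else 1 - q j) := by
          refine Finset.prod_congr rfl fun j hj => ?_
          have hji : j ≠ i := (Finset.mem_erase.mp hj).1
          have : ∀ ω, φ j (X j ω) = H j A (X j ω) := by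
            intro ω; rw [hφdef]; dsimp only; rw [if_neg hji]
          rw [integral_congr_ae (Filter.Eventually.of_forall this), hHint j A]
        have h6 : (∫ ω, φ i (X i ω) ∂μ) = q i * y i := by
          have : ∀ ω, φ i (X i ω) = X i ω * h i (X i ω) := by
            intro ω; rw [hφdef]; dsimp only; rw [if_pos rfl]
          rw [integral_congr_ae (Filter.Eventually.of_forall this), ← hyq i]
        rw [h5, h6, if_pos hiA']
        ring
      rw [Finset.sum_congr rfl step2, ← Finset.sum_mul]
      rw [prod_split A q (fun j => 1 - q j)]
      rw [← hTeq A]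
      ring
    calc (∑ A ∈ (Finset.univ : Finset (Fin n)).powerset,
          ((∏ i ∈ A, q i) * ∏ i ∈ Aᶜ, (1 - q i)) *
            (F.filter (fun S => S ⊆ A)).sup'
              ⟨∅, Finset.mem_filter.mpr ⟨hemp, Finset.empty_subset _⟩⟩
              (fun S => ∑ i ∈ S, y i))
        = ∑ A ∈ (Finset.univ : Finset (Fin n)).powerset,
            ∫ ω, (∏ j : Fin n, H j A (X j ω)) * ∑ i ∈ Tst A, X i ω ∂μ :=
          (Finset.sum_congr rfl hAeval).symm
      _ = ∫ ω, (∑ A ∈ (Finset.univ : Finset (Fin n)).powerset,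
            (∏ j : Fin n, H j A (X j ω)) * ∑ i ∈ Tst A, X i ω) ∂μ :=
          (integral_finset_sum _ (fun A _ => hterm_int A _ (hsumint A))).symm
      _ ≤ ∫ ω, F.sup' ⟨∅, hemp⟩ (fun T => ∑ i ∈ T, X i ω) ∂μ := by
          refine integral_mono (integrable_finset_sum _ (fun A _ => hterm_int A _ (hsumint A)))
            hMint hptw

/-- The worst-case ratio between the ex ante and ex post optima of Bayesian
combinatorial selection over `F` equals the correlation gap of `F`. -/
theorem stmt6 (n : ℕ) (F : Finset (Finset (Fin n)))
    (hdc : ∀ S ∈ F, ∀ T ⊆ S, T ∈ F) (hemp : ∅ ∈ F) :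
    (⨆ (x : Fin n → ℝ) (_ : x ∈ exAntePolytope n F)
        (y : Fin n → ℝ) (_ : ∀ i, 0 ≤ y i),
      ENNReal.ofReal (∑ i : Fin n, x i * y i) /
        ENNReal.ofReal (∑ A ∈ (Finset.univ : Finset (Fin n)).powerset,
          ((∏ i ∈ A, x i) * ∏ i ∈ Aᶜ, (1 - x i)) *
            (F.filter (fun S => S ⊆ A)).sup'
              ⟨∅, Finset.mem_filter.mpr ⟨hemp, Finset.empty_subset _⟩⟩
              (fun S => ∑ i ∈ S, y i)))
    = ⨆ (I : BCSInstance n)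
        (_ : (fun i => (I.μ {ω | i ∈ I.S ω}).toReal) ∈ exAntePolytope n F),
        ENNReal.ofReal (∫ ω, ∑ i ∈ I.S ω, I.X i ω ∂I.μ) /
          ENNReal.ofReal (∫ ω, F.sup' ⟨∅, hemp⟩ (fun T => ∑ i ∈ T, I.X i ω) ∂I.μ) := by
  classical
  apply le_antisymm
  · refine iSup_le fun x => iSup_le fun hx => iSup_le fun y => iSup_le fun hy => ?_
    obtain ⟨I, hmem, hnum, hden⟩ := easy_construct n F hdc hemp x hx y hy
    rw [← hnum, ← hden]
    refine le_iSup_of_le I ?_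
    exact le_iSup (fun _ => ENNReal.ofReal (∫ ω, ∑ i ∈ I.S ω, I.X i ω ∂I.μ) /
      ENNReal.ofReal (∫ ω, F.sup' ⟨∅, hemp⟩ (fun T => ∑ i ∈ T, I.X i ω) ∂I.μ)) hmem
  · refine iSup_le fun I => iSup_le fun hmem => ?_
    obtain ⟨y, hy, hnum, hden⟩ := hard_bound n F hdc hemp I hmem
    refine le_trans (ENNReal.div_le_div (ENNReal.ofReal_le_ofReal hnum)
      (ENNReal.ofReal_le_ofReal hden)) ?_
    refine le_iSup_of_le (fun i => (I.μ {ω | i ∈ I.S ω}).toReal) ?_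
    refine le_iSup_of_le hmem ?_
    refine le_iSup_of_le y ?_
    exact le_iSup_of_le hy le_rfl
end
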